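/- arXiv:1410.4109 — 6 statements merged into one kernel-verified Lean document; each statement's English description precedes it below -/
import Mathlib

section
/- For every integer n ≥ 2, the generating function g_n(12) for permutations whose flattened permutation begins with the letters 1,2 satisfies g_n(12) = 2·g_{n-1} in ℤ[q]. -/
open Finset Polynomial

/-- The cycle of `π` starting at `m`: `m, π m, π² m, …` through one full period. -/
noncomputable def cycleList {n : ℕ} (π : Equiv.Perm (Fin n)) (m : Fin n) : List (Fin n) :=
  (List.range (Function.minimalPeriod π m)).map (fun k => (π ^ k) m)

/-- The minima of the cycles of `π`, listed in increasing order. -/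
def cycleMins {n : ℕ} (π : Equiv.Perm (Fin n)) : List (Fin n) :=
  (Finset.univ.filter (fun m : Fin n => ∀ k < n, m ≤ (π ^ k) m)).sort (· ≤ ·)

/-- The flattened permutation of `π`, as a word on the letters `1, …, n`:
erase the parentheses from the standard cycle form of `π`. -/
noncomputable def flattenPerm {n : ℕ} (π : Equiv.Perm (Fin n)) : List ℕ :=
  ((cycleMins π).map (cycleList π)).flatten.map (fun m => (m : ℕ) + 1)

/-- The number of occurrences of the pattern 13-2 in the word `w = w₁w₂⋯wₙ`
(1-based), i.e. the number of pairs `(i,j)` with `2 ≤ i < j ≤ n` and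
`w_{i-1} < w_j < w_i`.  Below, `p.1` and `p.2` are the 0-based versions of `i` and `j`. -/
def occ (w : List ℕ) : ℕ :=
  ((Finset.range w.length ×ˢ Finset.range w.length).filter
    (fun p : ℕ × ℕ => 1 ≤ p.1 ∧ p.1 < p.2 ∧
      w.getD (p.1 - 1) 0 < w.getD p.2 0 ∧ w.getD p.2 0 < w.getD p.1 0)).card

/-- `g_n = Σ_{π ∈ S_n} q^{occ(Flatten(π))} ∈ ℤ[q]`. -/
noncomputable def gPoly (n : ℕ) : Polynomial ℤ :=
  ∑ π : Equiv.Perm (Fin n), X ^ occ (flattenPerm π)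

/-- `g_n(a₁⋯a_k)`: the sum of `q^{occ(Flatten(π))}` over the permutations `π` of length `n`
whose flattened permutation starts with the subword `a₁⋯a_k`. -/
noncomputable def gPrefix (n : ℕ) (w : List ℕ) : Polynomial ℤ :=
  ∑ π ∈ Finset.univ.filter (fun π : Equiv.Perm (Fin n) => w <+: flattenPerm π),
    X ^ occ (flattenPerm π)

/-- `g_{n,r}(a₁⋯a_k)`: the number of permutations `π` of length `n` such that `Flatten(π)`
starts with `a₁⋯a_k` and has exactly `r` occurrences of the pattern 13-2. -/
noncomputable def gCount (n r : ℕ) (w : List ℕ) : ℕ :=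
  (Finset.univ.filter (fun π : Equiv.Perm (Fin n) =>
    w <+: flattenPerm π ∧ occ (flattenPerm π) = r)).card

section Helpers

open Equiv Equiv.Perm Function

variable {N : ℕ}

lemma perm_mem_periodicPts (π : Perm (Fin N)) (m : Fin N) : m ∈ periodicPts ⇑π := by
  refine mk_mem_periodicPts (orderOf_pos π) ?_
  show (⇑π)^[orderOf π] m = m
  rw [Equiv.Perm.iterate_eq_pow]
  simp [pow_orderOf_eq_one]

lemma minPer_pos (π : Perm (Fin N)) (m : Fin N) : 0 < minimalPeriod ⇑π m :=
  minimalPeriod_pos_of_mem_periodicPts (perm_mem_periodicPts π m)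

lemma minPer_le (π : Perm (Fin N)) (m : Fin N) : minimalPeriod ⇑π m ≤ N := by
  have hinj : Function.Injective (fun k : Fin (minimalPeriod ⇑π m) => (π ^ (k : ℕ)) m) := by
    intro a b hab
    have := iterate_injOn_Iio_minimalPeriod (f := ⇑π) (x := m) a.2 b.2
      (by simpa [Equiv.Perm.iterate_eq_pow] using hab)
    exact Fin.ext this
  simpa using Fintype.card_le_of_injective _ hinj

lemma pow_mod_minPer (π : Perm (Fin N)) (m : Fin N) (k : ℕ) :
    (π ^ (k % minimalPeriod ⇑π m)) m = (π ^ k) m := by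
  have h := iterate_mod_minimalPeriod_eq (f := ⇑π) (x := m) (n := k)
  rwa [Equiv.Perm.iterate_eq_pow, Equiv.Perm.iterate_eq_pow] at h

lemma minSet_iff (π : Perm (Fin N)) (m : Fin N) :
    (∀ k < N, m ≤ (π ^ k) m) ↔ ∀ k, m ≤ (π ^ k) m := by
  refine ⟨fun h k => ?_, fun h k _ => h k⟩
  rw [← pow_mod_minPer π m k]
  exact h _ (lt_of_lt_of_le (Nat.mod_lt _ (minPer_pos π m)) (minPer_le π m))

lemma pow_succ_apply (π : Perm (Fin N)) (x : Fin N) (k : ℕ) :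
    (π ^ (k + 1)) x = π ((π ^ k) x) := by
  rw [pow_succ' π k, Equiv.Perm.mul_apply]

lemma isPeriodicPt_perm_iff (π : Perm (Fin N)) (m : Fin N) (k : ℕ) :
    IsPeriodicPt ⇑π k m ↔ (π ^ k) m = m := Iff.rfl

/-- transfer of `minimalPeriod` along a conjugation-like identity -/
lemma minPer_transfer {M : ℕ} (π : Perm (Fin (M + 1))) (e : Perm (Fin M)) (i : Fin M)
    (hpows : ∀ k, (π ^ k) i.succ = ((e ^ k) i).succ) :
    minimalPeriod ⇑π i.succ = minimalPeriod ⇑e i := by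
  rw [minimalPeriod_eq_minimalPeriod_iff]
  intro k
  rw [isPeriodicPt_perm_iff, isPeriodicPt_perm_iff, hpows k]
  exact ⟨fun h => Fin.succ_injective _ h, fun h => by rw [h]⟩

lemma cycleList_transfer {M : ℕ} (π : Perm (Fin (M + 1))) (e : Perm (Fin M)) (i : Fin M)
    (hpows : ∀ k, (π ^ k) i.succ = ((e ^ k) i).succ) :
    cycleList π i.succ = (cycleList e i).map Fin.succ := by
  unfold cycleList
  rw [minPer_transfer π e i hpows, List.map_map]
  exact List.map_congr_left (fun k _ => hpows k)

end Helpers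

section P0

open Equiv Equiv.Perm Function

variable {M : ℕ} (e : Perm (Fin M))

lemma pi0_succ_apply (i : Fin M) : (decomposeFin.symm (0, e)) i.succ = (e i).succ := by
  rw [decomposeFin_symm_apply_succ]
  simp

lemma pi0_pow_zero (k : ℕ) : ((decomposeFin.symm (0, e) : Perm (Fin (M + 1))) ^ k) 0 = 0 := by
  induction k with
  | zero => rfl
  | succ k ih => rw [pow_succ_apply, ih, decomposeFin_symm_apply_zero]

lemma pi0_pow_succ (i : Fin M) (k : ℕ) :
    ((decomposeFin.symm (0, e) : Perm (Fin (M + 1))) ^ k) i.succ = ((e ^ k) i).succ := by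
  induction k with
  | zero => rfl
  | succ k ih => rw [pow_succ_apply, ih, pi0_succ_apply, pow_succ_apply]

lemma pi0_cycleList_zero : cycleList (decomposeFin.symm (0, e)) 0 = [0] := by
  unfold cycleList
  rw [show minimalPeriod ⇑(decomposeFin.symm (0, e) : Perm (Fin (M+1))) 0 = 1 from
    minimalPeriod_eq_one_iff_isFixedPt.mpr (decomposeFin_symm_apply_zero 0 e)]
  rfl

lemma pi0_minSet :
    (Finset.univ.filter fun m : Fin (M + 1) =>
        ∀ k < M + 1, m ≤ ((decomposeFin.symm (0, e) : Perm (Fin (M + 1))) ^ k) m)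
      = insert 0 ((Finset.univ.filter fun m : Fin M => ∀ k < M, m ≤ (e ^ k) m).map
          ⟨Fin.succ, Fin.succ_injective M⟩) := by
  ext x
  simp only [mem_filter, mem_insert, mem_map, Function.Embedding.coeFn_mk, mem_univ, true_and]
  rw [minSet_iff]
  induction x using Fin.cases with
  | zero => simp [pi0_pow_zero]
  | succ i =>
      simp only [pi0_pow_succ, Fin.succ_le_succ_iff]
      constructor
      · intro h
        exact Or.inr ⟨i, by rw [minSet_iff]; exact h, rfl⟩
      · rintro (h | ⟨j, hj, hji⟩)
        · exact absurd h (Fin.succ_ne_zero i)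
        · obtain rfl : j = i := Fin.succ_injective _ hji
          rw [minSet_iff] at hj; exact hj

lemma pi0_cycleMins :
    cycleMins (decomposeFin.symm (0, e)) = 0 :: (cycleMins e).map Fin.succ := by
  unfold cycleMins
  refine (fun hp hs => List.Perm.eq_of_pairwise' (Finset.pairwise_sort _ _) hs hp) ?_ ?_
  · rw [← Multiset.coe_eq_coe]
    have h0 : (0 : Fin (M + 1)) ∉ (Finset.univ.filter fun m : Fin M =>
        ∀ k < M, m ≤ (e ^ k) m).map ⟨Fin.succ, Fin.succ_injective M⟩ := by
      simp [Fin.succ_ne_zero]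
    rw [Finset.sort_eq, pi0_minSet, Finset.insert_val_of_notMem h0, Finset.map_val,
      ← Finset.sort_eq (Finset.univ.filter fun m : Fin M => ∀ k < M, m ≤ (e ^ k) m) (· ≤ ·),
      Multiset.map_coe, Multiset.cons_coe]
    simp [cycleMins]
  · rw [List.pairwise_cons]
    constructor
    · intro b hb; exact Fin.zero_le b
    · exact List.Pairwise.map _ (fun a b h => Fin.succ_le_succ_iff.mpr h)
        (Finset.pairwise_sort _ _)

lemma listCoe_eq {N : ℕ} (l : List (Fin N)) : (l : List ℕ) = l.map Fin.val := by
  induction l with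
  | nil => rfl
  | cons a t ih => show (a : ℕ) :: (t : List ℕ) = _; rw [ih]; rfl

lemma pi0_flatten :
    flattenPerm (decomposeFin.symm (0, e)) = 1 :: (flattenPerm e).map (· + 1) := by
  unfold flattenPerm
  rw [pi0_cycleMins, List.map_cons, pi0_cycleList_zero, List.map_map]
  have hcomp : (cycleList (decomposeFin.symm (0, e)) ∘ Fin.succ)
      = fun i => (cycleList e i).map Fin.succ := by
    funext i
    exact cycleList_transfer _ e i (pi0_pow_succ e i)
  rw [hcomp]
  have hfl : (List.map (fun i => (cycleList e i).map Fin.succ) (cycleMins e)).flatten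
      = List.map Fin.succ ((List.map (cycleList e) (cycleMins e)).flatten) := by
    rw [List.map_flatten, List.map_map]
    rfl
  rw [List.flatten_cons, hfl, List.singleton_append, listCoe_eq, listCoe_eq,
    List.map_cons, List.map_map, List.map_cons, List.map_map, List.map_map, List.map_map]
  congr 1

end P0

section P1

open Equiv Equiv.Perm Function

variable {M : ℕ} (e : Perm (Fin (M + 1)))

lemma pi1_succ_apply (i : Fin (M + 1)) :
    (decomposeFin.symm (1, e) : Perm (Fin (M + 2))) i.succ
      = if e i = 0 then 0 else (e i).succ := by
  rw [decomposeFin_symm_apply_succ]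
  by_cases h : e i = 0
  · rw [if_pos h, h, Fin.succ_zero_eq_one, Equiv.swap_apply_right]
  · rw [if_neg h, Equiv.swap_apply_of_ne_of_ne (Fin.succ_ne_zero _)
      (fun hc => h (Fin.succ_injective _ (by rw [hc, Fin.succ_zero_eq_one])))]

lemma pi1_pow_orbit (k : ℕ) (hk : k < minimalPeriod ⇑e 0) :
    ((decomposeFin.symm (1, e) : Perm (Fin (M + 2))) ^ (k + 1)) 0 = ((e ^ k) 0).succ := by
  induction k with
  | zero =>
      show (decomposeFin.symm (1, e) : Perm (Fin (M + 2))) 0 = _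
      rw [decomposeFin_symm_apply_zero, pow_zero, Equiv.Perm.one_apply, Fin.succ_zero_eq_one]
  | succ k ih =>
      have hk' : k < minimalPeriod ⇑e 0 := Nat.lt_of_succ_lt hk
      rw [pow_succ_apply, ih hk', pi1_succ_apply]
      have hne : e ((e ^ k) 0) ≠ 0 := by
        rw [← pow_succ_apply]
        intro hc
        exact not_isPeriodicPt_of_pos_of_lt_minimalPeriod (Nat.succ_ne_zero k) hk hc
      rw [if_neg hne, ← pow_succ_apply]

lemma pi1_pow_period :
    ((decomposeFin.symm (1, e) : Perm (Fin (M + 2))) ^ (minimalPeriod ⇑e 0 + 1)) 0 = 0 := by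
  have hT : 0 < minimalPeriod ⇑e 0 := minPer_pos e 0
  obtain ⟨T, hT'⟩ : ∃ T, minimalPeriod ⇑e 0 = T + 1 := ⟨_, (Nat.succ_pred_eq_of_pos hT).symm⟩
  rw [hT', pow_succ_apply, pi1_pow_orbit e T (by omega), pi1_succ_apply]
  have h0 : e ((e ^ T) 0) = 0 := by
    rw [← pow_succ_apply, ← hT']
    exact isPeriodicPt_minimalPeriod ⇑e 0
  rw [if_pos h0]

lemma pi1_minPer_zero :
    minimalPeriod ⇑(decomposeFin.symm (1, e) : Perm (Fin (M + 2))) 0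
      = minimalPeriod ⇑e 0 + 1 := by
  set π : Perm (Fin (M + 2)) := decomposeFin.symm (1, e) with hπ
  have hper : IsPeriodicPt ⇑π (minimalPeriod ⇑e 0 + 1) 0 := pi1_pow_period e
  have hle : minimalPeriod ⇑π 0 ≤ minimalPeriod ⇑e 0 + 1 :=
    hper.minimalPeriod_le (Nat.succ_pos _) 
  have hpos : 0 < minimalPeriod ⇑π 0 := minPer_pos π 0
  by_contra hne
  have hlt : minimalPeriod ⇑π 0 < minimalPeriod ⇑e 0 + 1 := lt_of_le_of_ne hle hne
  obtain ⟨P, hP⟩ : ∃ P, minimalPeriod ⇑π 0 = P + 1 := ⟨_, (Nat.succ_pred_eq_of_pos hpos).symm⟩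
  have h1 : (π ^ (P + 1)) 0 = ((e ^ P) 0).succ := pi1_pow_orbit e P (by omega)
  have h2 : (π ^ (P + 1)) 0 = 0 := by
    rw [← hP]; exact isPeriodicPt_minimalPeriod ⇑π 0
  exact Fin.succ_ne_zero _ (h1 ▸ h2)

lemma pi1_cycleList_zero :
    cycleList (decomposeFin.symm (1, e) : Perm (Fin (M + 2))) 0
      = 0 :: (cycleList e 0).map Fin.succ := by
  unfold cycleList
  rw [pi1_minPer_zero, List.range_succ_eq_map, List.map_cons, List.map_map, List.map_map]
  congr 1
  refine List.map_congr_left (fun k hk => ?_)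
  rw [List.mem_range] at hk
  exact pi1_pow_orbit e k hk

lemma pi1_pow_succ_partial (i : Fin (M + 1)) (k : ℕ) (h : ∀ l, l ≤ k → (e ^ l) i ≠ 0) :
    ((decomposeFin.symm (1, e) : Perm (Fin (M + 2))) ^ k) i.succ = ((e ^ k) i).succ := by
  induction k with
  | zero => rfl
  | succ k ih =>
      rw [pow_succ_apply, ih (fun l hl => h l (Nat.le_succ_of_le hl)), pi1_succ_apply]
      have hne : e ((e ^ k) i) ≠ 0 := by
        rw [← pow_succ_apply]; exact h (k + 1) le_rfl
      rw [if_neg hne, ← pow_succ_apply]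

lemma pi1_pow_succ (i : Fin (M + 1)) (hnz : ∀ k, (e ^ k) i ≠ 0) (k : ℕ) :
    ((decomposeFin.symm (1, e) : Perm (Fin (M + 2))) ^ k) i.succ = ((e ^ k) i).succ :=
  pi1_pow_succ_partial e i k (fun l _ => hnz l)

lemma pi1_minSet :
    (Finset.univ.filter fun m : Fin (M + 2) =>
        ∀ k < M + 2, m ≤ ((decomposeFin.symm (1, e) : Perm (Fin (M + 2))) ^ k) m)
      = insert 0 (((Finset.univ.filter fun m : Fin (M + 1) =>
          ∀ k < M + 1, m ≤ (e ^ k) m).erase 0).map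
            ⟨Fin.succ, Fin.succ_injective (M + 1)⟩) := by
  set π : Perm (Fin (M + 2)) := decomposeFin.symm (1, e) with hπ
  ext x
  simp only [mem_filter, mem_insert, mem_map, mem_erase, Function.Embedding.coeFn_mk,
    mem_univ, true_and]
  rw [minSet_iff]
  induction x using Fin.cases with
  | zero => simp [Fin.zero_le]
  | succ i =>
      constructor
      · intro h
        have hnz : ∀ k, (e ^ k) i ≠ 0 := by
          by_contra hc
          push_neg at hc
          obtain ⟨k, hk⟩ := hc
          have hex : ∃ k, (e ^ k) i = 0 := ⟨k, hk⟩
          obtain ⟨k₀, hk₀0, hk₀min⟩ : ∃ k₀, (e ^ k₀) i = 0 ∧ ∀ l < k₀, (e ^ l) i ≠ 0 :=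
            ⟨Nat.find hex, Nat.find_spec hex, fun l hl => Nat.find_min hex hl⟩
          rcases k₀ with _ | j
          · have hi0 : i = 0 := by simpa using hk₀0
            have h10 : (π ^ minimalPeriod ⇑e 0) (1 : Fin (M + 2)) = 0 := by
              have hp := pi1_pow_period e
              rw [pow_succ, Equiv.Perm.mul_apply, decomposeFin_symm_apply_zero] at hp
              exact hp
            have hle := h (minimalPeriod ⇑e 0)
            rw [hi0, Fin.succ_zero_eq_one, h10] at hle
            exact absurd (Fin.le_zero_iff.mp hle) one_ne_zero
          · have hmin : ∀ l, l ≤ j → (e ^ l) i ≠ 0 := fun l hl => hk₀min l (by omega)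
            have hj : (π ^ (j + 1)) i.succ = 0 := by
              rw [pow_succ_apply, pi1_pow_succ_partial e i j hmin, pi1_succ_apply,
                if_pos (by rw [← pow_succ_apply]; exact hk₀0)]
            have hle := h (j + 1)
            rw [hj] at hle
            exact Fin.succ_ne_zero i (Fin.le_zero_iff.mp hle)
        refine Or.inr ⟨i, ⟨?_, ?_⟩, rfl⟩
        · intro hi0
          exact hnz 0 (by simpa using hi0)
        · rw [minSet_iff]
          intro k
          have hk := h k
          rwa [pi1_pow_succ e i hnz k, Fin.succ_le_succ_iff] at hk
      · rintro (h | ⟨j, ⟨hj0, hj⟩, hji⟩)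
        · exact absurd h (Fin.succ_ne_zero i)
        · rw [minSet_iff] at hj
          have hnz : ∀ k, (e ^ k) j ≠ 0 := fun k hc =>
            hj0 (le_antisymm (by rw [← hc]; exact hj k) (Fin.zero_le j))
          intro k
          rw [← hji, pi1_pow_succ e j hnz k, Fin.succ_le_succ_iff]
          exact hj k

lemma cycleMins_zero_cons {K : ℕ} (f : Perm (Fin (K + 1))) :
    ∃ t, cycleMins f = 0 :: t := by
  have h0 : (0 : Fin (K + 1)) ∈ cycleMins f := by
    rw [cycleMins, Finset.mem_sort]
    simp [Fin.zero_le]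
  have hsorted : List.Pairwise (· ≤ ·) (cycleMins f) := Finset.pairwise_sort _ _
  have hne : cycleMins f ≠ [] := fun hnil => by simp [hnil] at h0
  obtain ⟨a, t, hc⟩ := List.exists_cons_of_ne_nil hne
  have h0' : (0 : Fin (K + 1)) ∈ a :: t := hc ▸ h0
  have hs' : List.Pairwise (· ≤ ·) (a :: t) := hc ▸ hsorted
  refine ⟨t, ?_⟩
  rw [hc]
  rcases List.mem_cons.mp h0' with h | h
  · rw [← h]
  · rw [le_antisymm ((List.pairwise_cons.mp hs').1 0 h) (Fin.zero_le a)]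

lemma listCoe_flatMap {N : ℕ} (l : List (Fin N)) :
    (l.flatMap fun a => [((a : ℕ))]) = l.map Fin.val := by
  induction l with
  | nil => rfl
  | cons a t ih => simp [List.flatMap_cons, ← List.map_eq_flatMap]

lemma pi1_cycleMins (t : List (Fin (M + 1))) (ht : cycleMins e = 0 :: t) :
    cycleMins (decomposeFin.symm (1, e) : Perm (Fin (M + 2))) = 0 :: t.map Fin.succ := by
  unfold cycleMins
  refine (fun hp hs => List.Perm.eq_of_pairwise' (Finset.pairwise_sort _ _) hs hp) ?_ ?_
  · rw [← Multiset.coe_eq_coe]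
    have h0 : (0 : Fin (M + 2)) ∉ ((Finset.univ.filter fun m : Fin (M + 1) =>
        ∀ k < M + 1, m ≤ (e ^ k) m).erase 0).map ⟨Fin.succ, Fin.succ_injective (M + 1)⟩ := by
      simp [Fin.succ_ne_zero]
    have hval : (Finset.univ.filter fun m : Fin (M + 1) => ∀ k < M + 1, m ≤ (e ^ k) m).val
        = ((0 :: t : List (Fin (M + 1))) : Multiset (Fin (M + 1))) := by
      rw [← ht]
      exact (Finset.sort_eq _ _).symm
    rw [Finset.sort_eq, pi1_minSet, Finset.insert_val_of_notMem h0, Finset.map_val,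
      Finset.erase_val, hval, ← Multiset.cons_coe, Multiset.erase_cons_head,
      Multiset.map_coe, Multiset.cons_coe]
    rfl
  · rw [List.pairwise_cons]
    refine ⟨fun b _ => Fin.zero_le b, ?_⟩
    have hs : List.Pairwise (· ≤ ·) (0 :: t) := ht ▸ Finset.pairwise_sort _ _
    exact List.Pairwise.map _ (fun a b h => Fin.succ_le_succ_iff.mpr h)
      (List.pairwise_cons.mp hs).2

lemma pi1_flatten :
    flattenPerm (decomposeFin.symm (1, e) : Perm (Fin (M + 2)))
      = 1 :: (flattenPerm e).map (· + 1) := by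
  obtain ⟨t, ht⟩ := cycleMins_zero_cons e
  have hmem : ∀ i ∈ t, ∀ k, (e ^ k) i ≠ 0 := by
    intro i hi
    have hiS : i ∈ (Finset.univ.filter fun m : Fin (M + 1) =>
        ∀ k < M + 1, m ≤ (e ^ k) m) := by
      have h1 : i ∈ cycleMins e := ht ▸ List.mem_cons_of_mem 0 hi
      rwa [cycleMins, Finset.mem_sort] at h1
    have hne : i ≠ 0 := by
      have hnd : (0 :: t).Nodup := ht ▸ Finset.sort_nodup _ _
      exact fun h => (List.nodup_cons.mp hnd).1 (h ▸ hi)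
    rw [Finset.mem_filter] at hiS
    have hiS2 := (minSet_iff e i).mp hiS.2
    intro k hc
    exact hne (le_antisymm (by rw [← hc]; exact hiS2 k) (Fin.zero_le i))
  unfold flattenPerm
  rw [pi1_cycleMins e t ht, ht, List.map_cons, pi1_cycleList_zero, List.map_cons,
    List.flatten_cons, List.flatten_cons]
  have hcomp : List.map (cycleList (decomposeFin.symm (1, e) : Perm (Fin (M + 2)))) 
      (t.map Fin.succ) = List.map (fun i => (cycleList e i).map Fin.succ) t := by
    rw [List.map_map]
    exact List.map_congr_left (fun i hi =>
      cycleList_transfer _ e i (pi1_pow_succ e i (hmem i hi)))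
  rw [hcomp]
  have hfl : (List.map (fun i => (cycleList e i).map Fin.succ) t).flatten
      = List.map Fin.succ ((List.map (cycleList e) t).flatten) := by
    rw [List.map_flatten, List.map_map]
    rfl
  rw [hfl, List.cons_append, ← List.map_append, listCoe_eq, listCoe_eq]
  simp only [List.map_cons, List.map_map]
  congr 1

lemma flatten_head {K : ℕ} (f : Perm (Fin (K + 1))) : ∃ u, flattenPerm f = 1 :: u := by
  obtain ⟨t, ht⟩ := cycleMins_zero_cons f
  have hT : 0 < minimalPeriod ⇑f 0 := minPer_pos f 0
  obtain ⟨T, hT'⟩ : ∃ T, minimalPeriod ⇑f 0 = T + 1 :=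
    ⟨_, (Nat.succ_pred_eq_of_pos hT).symm⟩
  obtain ⟨c, hc⟩ : ∃ c, cycleList f 0 = 0 :: c := by
    refine ⟨(List.range T).map (fun k => (f ^ (k + 1)) 0), ?_⟩
    unfold cycleList
    rw [hT', List.range_succ_eq_map, List.map_cons, List.map_map]
    rfl
  refine ⟨(c ++ (List.map (cycleList f) t).flatten).map (fun m => (m : ℕ) + 1), ?_⟩
  unfold flattenPerm
  rw [ht, List.map_cons, hc, List.flatten_cons, List.cons_append, listCoe_eq]
  simp [listCoe_flatMap, List.map_map, Function.comp_def, ← List.map_eq_flatMap]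

lemma flatten_second {K : ℕ} (f : Perm (Fin (K + 2))) (hf : f 0 ≠ 0) :
    ∃ u, flattenPerm f = 1 :: ((f 0 : ℕ) + 1) :: u := by
  obtain ⟨t, ht⟩ := cycleMins_zero_cons f
  have hT : 0 < minimalPeriod ⇑f 0 := minPer_pos f 0
  have hT1 : minimalPeriod ⇑f 0 ≠ 1 := by
    intro h1
    exact hf (minimalPeriod_eq_one_iff_isFixedPt.mp h1)
  obtain ⟨T, hT'⟩ : ∃ T, minimalPeriod ⇑f 0 = T + 2 := by
    refine ⟨minimalPeriod ⇑f 0 - 2, by omega⟩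
  obtain ⟨c, hc⟩ : ∃ c, cycleList f 0 = 0 :: f 0 :: c := by
    refine ⟨(List.range T).map (fun k => (f ^ (k + 2)) 0), ?_⟩
    unfold cycleList
    rw [hT', List.range_succ_eq_map, List.range_succ_eq_map, List.map_cons, List.map_cons,
      List.map_map, List.map_cons, List.map_map]
    congr 2
  refine ⟨(c ++ (List.map (cycleList f) t).flatten).map (fun m => (m : ℕ) + 1), ?_⟩
  unfold flattenPerm
  rw [ht, List.map_cons, hc, List.flatten_cons, List.cons_append, List.cons_append, listCoe_eq]
  simp [listCoe_flatMap, List.map_map, Function.comp_def, ← List.map_eq_flatMap]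

lemma decompose_eta {K : ℕ} (f : Perm (Fin (K + 1))) :
    (decomposeFin.symm (f 0, (decomposeFin f).2) : Perm (Fin (K + 1))) = f := by
  have h1 : (decomposeFin f).1 = f 0 := by
    conv_rhs => rw [← decomposeFin.symm_apply_apply f]
    rw [show (decomposeFin f : Fin (K+1) × Perm (Fin K))
      = ((decomposeFin f).1, (decomposeFin f).2) from rfl, decomposeFin_symm_apply_zero]
  rw [← h1, Prod.mk.eta, decomposeFin.symm_apply_apply]

end P1

section OccLemmas

lemma getD_map_add_one (w : List ℕ) (i : ℕ) (h : i < w.length) :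
    (w.map (· + 1)).getD i 0 = w.getD i 0 + 1 := by
  rw [List.getD_eq_getElem _ _ (by simpa using h), List.getElem_map, List.getD_eq_getElem _ _ h]

lemma occ_map_add_one (w : List ℕ) : occ (w.map (· + 1)) = occ w := by
  unfold occ
  rw [List.length_map]
  refine congrArg Finset.card (Finset.filter_congr (fun p hp => ?_))
  rw [Finset.mem_product, Finset.mem_range, Finset.mem_range] at hp
  obtain ⟨h1, h2⟩ := hp
  rw [getD_map_add_one w _ (by omega), getD_map_add_one w _ h2, getD_map_add_one w _ h1]
  constructor <;> rintro ⟨ha, hb, hc, hd⟩ <;> exact ⟨ha, hb, by omega, by omega⟩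

lemma occ_cons_one (w : List ℕ) (h0 : w.getD 0 0 = 2) : occ (1 :: w) = occ w := by
  unfold occ
  rw [List.length_cons]
  refine Finset.card_nbij' (fun p => (p.1 - 1, p.2 - 1)) (fun p => (p.1 + 1, p.2 + 1))
    ?_ ?_ ?_ ?_
  · rintro ⟨x, y⟩ h
    rw [Finset.mem_coe, Finset.mem_filter, Finset.mem_product, Finset.mem_range, Finset.mem_range] at h
    obtain ⟨⟨hx, hy⟩, h1, hlt, hc, hd⟩ := h
    have hx2 : 2 ≤ x := by
      rcases Nat.lt_or_ge x 2 with hl | hl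
      · exfalso
        have hx1 : x = 1 := by omega
        subst hx1
        rw [show ((1:ℕ) :: w).getD (1 - 1) 0 = 1 from rfl] at hc
        rw [show ((1:ℕ) :: w).getD 1 0 = w.getD 0 0 from rfl, h0] at hd
        omega
      · exact hl
    obtain ⟨x', rfl⟩ : ∃ x', x = x' + 2 := ⟨x - 2, by omega⟩
    obtain ⟨y', rfl⟩ : ∃ y', y = y' + 1 := ⟨y - 1, by omega⟩
    dsimp only at hc hd hlt hx hy h1 ⊢
    rw [Finset.mem_coe, Finset.mem_filter, Finset.mem_product, Finset.mem_range, Finset.mem_range]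
    rw [show x' + 2 - 1 = x' + 1 by omega] at hc
    rw [List.getD_cons_succ, List.getD_cons_succ] at hc
    rw [List.getD_cons_succ, List.getD_cons_succ] at hd
    rw [show x' + 2 - 1 = x' + 1 by omega, show y' + 1 - 1 = y' by omega,
      show x' + 1 - 1 = x' by omega]
    exact ⟨⟨by omega, by omega⟩, by omega, by omega, hc, hd⟩
  · rintro ⟨x, y⟩ h
    rw [Finset.mem_coe, Finset.mem_filter, Finset.mem_product, Finset.mem_range, Finset.mem_range] at h
    obtain ⟨⟨hx, hy⟩, h1, hlt, hc, hd⟩ := h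
    obtain ⟨x', rfl⟩ : ∃ x', x = x' + 1 := ⟨x - 1, by omega⟩
    dsimp only at hc hd hlt hx hy h1 ⊢
    rw [Finset.mem_coe, Finset.mem_filter, Finset.mem_product, Finset.mem_range, Finset.mem_range]
    rw [show x' + 1 - 1 = x' by omega] at hc
    rw [show x' + 1 + 1 - 1 = x' + 1 by omega, List.getD_cons_succ, List.getD_cons_succ,
      List.getD_cons_succ]
    exact ⟨⟨by omega, by omega⟩, by omega, by omega, hc, hd⟩
  · rintro ⟨x, y⟩ h
    rw [Finset.mem_coe, Finset.mem_filter] at h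
    obtain ⟨_, h1, hlt, _, _⟩ := h
    simp only [Prod.mk.injEq]
    constructor <;> omega
  · rintro ⟨x, y⟩ _
    simp

end OccLemmas

section Assembly

open Equiv Equiv.Perm Function

lemma flatten_head_getD {K : ℕ} (f : Perm (Fin (K + 1))) :
    ((flattenPerm f).map (· + 1)).getD 0 0 = 2 := by
  obtain ⟨u, hu⟩ := flatten_head f
  rw [hu]
  rfl

lemma occ_flatten_eq {M : ℕ} (e : Perm (Fin (M + 1))) (p : Fin (M + 2))
    (hp : flattenPerm (decomposeFin.symm (p, e) : Perm (Fin (M + 2)))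
      = 1 :: (flattenPerm e).map (· + 1)) :
    occ (flattenPerm (decomposeFin.symm (p, e) : Perm (Fin (M + 2)))) = occ (flattenPerm e) := by
  rw [hp, occ_cons_one _ (flatten_head_getD e), occ_map_add_one]

lemma flatten_prefix_iff {K : ℕ} (f : Perm (Fin (K + 2))) :
    [1, 2] <+: flattenPerm f ↔ f 0 = 0 ∨ f 0 = 1 := by
  constructor
  · intro h
    by_cases h0 : f 0 = 0
    · exact Or.inl h0
    · obtain ⟨u, hu⟩ := flatten_second f h0
      right
      rw [hu] at h
      obtain ⟨s, hs⟩ := h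
      have h2 : (2 : ℕ) = (f 0 : ℕ) + 1 := by
        have := congrArg (fun l => l.getD 1 0) hs
        simpa using this
      have hval : (f 0 : ℕ) = 1 := by omega
      refine Fin.ext ?_
      rw [hval]
      simp
  · intro h
    rcases h with h0 | h1
    · rw [← decompose_eta f, h0, pi0_flatten]
      obtain ⟨u, hu⟩ := flatten_head (decomposeFin f).2
      rw [hu]
      exact ⟨_, rfl⟩
    · rw [← decompose_eta f, h1, pi1_flatten]
      obtain ⟨u, hu⟩ := flatten_head (decomposeFin f).2
      rw [hu]
      exact ⟨_, rfl⟩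

lemma sum_filter_eq_gPoly {M : ℕ} (p : Fin (M + 2))
    (hflat : ∀ e : Perm (Fin (M + 1)),
      flattenPerm (decomposeFin.symm (p, e) : Perm (Fin (M + 2)))
        = 1 :: (flattenPerm e).map (· + 1)) :
    ∑ f ∈ Finset.univ.filter (fun f : Perm (Fin (M + 2)) => f 0 = p),
      (X : Polynomial ℤ) ^ occ (flattenPerm f) = gPoly (M + 1) := by
  unfold gPoly
  refine Finset.sum_nbij' (fun f => (decomposeFin f).2) (fun e => decomposeFin.symm (p, e))
    (fun f _ => Finset.mem_univ _) ?_ ?_ ?_ ?_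
  · intro e _
    rw [Finset.mem_filter]
    exact ⟨Finset.mem_univ _, decomposeFin_symm_apply_zero p e⟩
  · intro f hf
    rw [Finset.mem_filter] at hf
    rw [← hf.2]
    exact decompose_eta f
  · intro e _
    rw [Equiv.apply_symm_apply]
  · intro f hf
    rw [Finset.mem_filter] at hf
    conv_lhs => rw [← decompose_eta f, hf.2]
    rw [occ_flatten_eq _ p (hflat _)]

end Assembly

/-- For every `n ≥ 2`, `g_n(12) = 2·g_{n-1}` in `ℤ[q]`. -/
theorem gPrefix_one_two (n : ℕ) (hn : 2 ≤ n) :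
    gPrefix n [1, 2] = 2 * gPoly (n - 1) := by
  obtain ⟨M, rfl⟩ : ∃ M, n = M + 2 := ⟨n - 2, by omega⟩
  unfold gPrefix
  have hfilter : (Finset.univ.filter
        (fun f : Equiv.Perm (Fin (M + 2)) => [1, 2] <+: flattenPerm f))
      = (Finset.univ.filter (fun f : Equiv.Perm (Fin (M + 2)) => f 0 = 0))
        ∪ (Finset.univ.filter (fun f : Equiv.Perm (Fin (M + 2)) => f 0 = 1)) := by
    ext f
    simp only [Finset.mem_filter, Finset.mem_union, Finset.mem_univ, true_and]
    exact flatten_prefix_iff f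
  have hdisj : Disjoint
      (Finset.univ.filter (fun f : Equiv.Perm (Fin (M + 2)) => f 0 = 0))
      (Finset.univ.filter (fun f : Equiv.Perm (Fin (M + 2)) => f 0 = 1)) := by
    rw [Finset.disjoint_left]
    intro f hf0 hf1
    rw [Finset.mem_filter] at hf0 hf1
    rw [hf0.2] at hf1
    exact absurd hf1.2.symm one_ne_zero
  rw [hfilter, Finset.sum_union hdisj,
    sum_filter_eq_gPoly 0 (fun e => pi0_flatten e),
    sum_filter_eq_gPoly 1 (fun e => pi1_flatten e)]
  rw [show M + 2 - 1 = M + 1 from rfl]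
  ring
end

section
/- As formal power series in x and y over ℤ[q], one has ((1−x)(1−qx) − xy) · Σ_{k≥2} Σ_{j≥1} a_{k,j} x^{k-2} y^{j-1} = 1 − qx + xy, where the polynomials a_{k,j} ∈ ℤ[q] (k ≥ 2, j ∈ ℤ) are defined by a_{2,j} = 1 if j = 1 and 0 otherwise, a_{3,j} = j if j ∈ {1,2} and 0 otherwise, and a_{k,j} = (1+q)·a_{k-1,j} − q·a_{k-2,j} + a_{k-1,j-1} for k ≥ 4. -/
open Finset Polynomial

/-- The double sequence `a_{k,j} ∈ ℤ[q]` of the paper: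
`a_{2,j} = χ(j=1)`, `a_{3,j} = j·χ(j∈{1,2})`, and
`a_{k,j} = (1+q)a_{k-1,j} − q·a_{k-2,j} + a_{k-1,j-1}` for `k ≥ 4`. -/
noncomputable def aP : ℕ → ℤ → Polynomial ℤ
  | 0, _ => 0
  | 1, _ => 0
  | 2, j => if j = 1 then 1 else 0
  | 3, j => if j = 1 then 1 else if j = 2 then 2 else 0
  | (k + 4), j => (1 + X) * aP (k + 3) j - X * aP (k + 2) j + aP (k + 3) (j - 1)

lemma aP_nonpos : ∀ k, ∀ j : ℤ, j ≤ 0 → aP k j = 0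
  | 0, j, h => rfl
  | 1, j, h => rfl
  | 2, j, h => by simp only [aP]; rw [if_neg (by omega)]
  | 3, j, h => by simp only [aP]; rw [if_neg (by omega), if_neg (by omega)]
  | (k+4), j, h => by
      rw [aP, aP_nonpos (k+3) j h, aP_nonpos (k+2) j h, aP_nonpos (k+3) (j-1) (by omega)]
      ring

lemma key (m n : ℕ) :
    aP (m+2) ((n:ℤ)+1)
      - X * (if 1 ≤ m then aP (m-1+2) ((n:ℤ)+1) else 0)
      - (if 1 ≤ m then aP (m-1+2) ((n:ℤ)+1) else 0)
      + X * (if 2 ≤ m then aP (m-2+2) ((n:ℤ)+1) else 0)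
      - (if 1 ≤ m ∧ 1 ≤ n then aP (m-1+2) ((n:ℤ)-1+1) else 0)
    = (if m = 0 ∧ n = 0 then 1 else 0)
      - (if m = 1 ∧ n = 0 then X else 0)
      + (if m = 1 ∧ n = 1 then 1 else 0) := by
  match m, n with
  | 0, 0 => simp [aP]
  | 0, (n+1) => simp [aP]; omega
  | 1, 0 => norm_num [aP]
  | 1, 1 => norm_num [aP]
  | 1, (n+2) => norm_num [aP, show ((n:ℤ)+2) ≠ 0 from by omega, show ((n:ℤ)+2+1) ≠ 2 from by omega, show ((n:ℤ)+2) ≠ 1 from by omega, show n+2 ≠ 1 from by omega]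
  | (m+2), n =>
    have h4 : m + 2 + 2 = m + 4 := by omega
    rw [h4, aP]
    have h1 : (1:ℕ) ≤ m + 2 := by omega
    have h2 : (2:ℕ) ≤ m + 2 := by omega
    simp only [if_pos h1, if_pos h2, show m+2-1 = m+1 from rfl, show m+2-2 = m from rfl]
    match n with
    | 0 =>
      norm_num [show m+2 ≠ 1 from by omega]
      rw [aP_nonpos (m+3) 0 le_rfl, show m+1+2 = m+3 from by omega]
      ring
    | (n+1) =>
      have : ((n:ℤ)+1+1-1) = (n:ℤ)+1 := by ring
      norm_num [this, show 2+m ≠ 1 from by omega]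
      rw [if_neg (show ¬(m + 2 = 1 ∧ n = 0) from by omega), show m+1+2 = m+3 from by omega]
      ring


/-- As formal power series in `x` and `y` over `ℤ[q]`,
`((1−x)(1−qx) − xy)·Σ_{k≥2} Σ_{j≥1} a_{k,j} x^{k-2} y^{j-1} = 1 − qx + xy`. -/
theorem aP_generating_function :
    letI q : MvPowerSeries (Fin 2) (Polynomial ℤ) := MvPowerSeries.C X
    letI x : MvPowerSeries (Fin 2) (Polynomial ℤ) := MvPowerSeries.X 0
    letI y : MvPowerSeries (Fin 2) (Polynomial ℤ) := MvPowerSeries.X 1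
    letI A : MvPowerSeries (Fin 2) (Polynomial ℤ) := fun d => aP (d 0 + 2) ((d 1 : ℤ) + 1)
    ((1 - x) * (1 - q * x) - x * y) * A = 1 - q * x + x * y := by

  set q : MvPowerSeries (Fin 2) (Polynomial ℤ) := MvPowerSeries.C X with hq
  set x : MvPowerSeries (Fin 2) (Polynomial ℤ) := MvPowerSeries.X 0 with hxdef
  set y : MvPowerSeries (Fin 2) (Polynomial ℤ) := MvPowerSeries.X 1 with hy
  set A : MvPowerSeries (Fin 2) (Polynomial ℤ) := fun d => aP (d 0 + 2) ((d 1 : ℤ) + 1) with hA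
  set e1 : Fin 2 →₀ ℕ := Finsupp.single 0 1 with he1
  set e2 : Fin 2 →₀ ℕ := Finsupp.single 0 2 with he2
  set e11 : Fin 2 →₀ ℕ := Finsupp.single 0 1 + Finsupp.single 1 1 with he11
  have hx : x = MvPowerSeries.monomial e1 1 := by
    simp [hxdef, MvPowerSeries.X, he1]
  have hqx : q * x = MvPowerSeries.monomial e1 X := by
    rw [hq, hx, ← MvPowerSeries.monomial_zero_eq_C_apply, MvPowerSeries.monomial_mul_monomial]
    simp
  have hqx2 : q * (x * x) = MvPowerSeries.monomial e2 X := by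
    rw [hq, hx, ← MvPowerSeries.monomial_zero_eq_C_apply, MvPowerSeries.monomial_mul_monomial,
      MvPowerSeries.monomial_mul_monomial]
    have h12 : (0 : Fin 2 →₀ ℕ) + e1 + e1 = e2 := by
      ext s
      fin_cases s <;> simp [he1, he2]
    rw [← add_assoc, h12, mul_one, mul_one]
  have hxy : x * y = MvPowerSeries.monomial e11 1 := by
    rw [hx, hy, MvPowerSeries.X, MvPowerSeries.monomial_mul_monomial]
    simp [he11, he1]
  have expand : ((1 - x) * (1 - q * x) - x * y) * A
      = A - (q*x) * A - x * A + (q*(x*x)) * A - (x*y) * A := by ring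
  apply MvPowerSeries.ext
  intro d
  rw [expand]
  simp only [hqx, hqx2, hxy]
  simp only [hx]
  simp only [map_sub, map_add, MvPowerSeries.coeff_monomial_mul,
    map_one, MvPowerSeries.coeff_one, MvPowerSeries.coeff_monomial]
  have hcA : ∀ e : Fin 2 →₀ ℕ,
      (MvPowerSeries.coeff e) A = aP (e 0 + 2) ((e 1 : ℤ) + 1) := fun e => rfl
  have s10 : (d - e1) 0 = d 0 - 1 := by simp [he1, Finsupp.tsub_apply]
  have s11 : (d - e1) 1 = d 1 := by simp [he1, Finsupp.tsub_apply, Finsupp.single_apply]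
  have s20 : (d - e2) 0 = d 0 - 2 := by simp [he2, Finsupp.tsub_apply]
  have s21 : (d - e2) 1 = d 1 := by simp [he2, Finsupp.tsub_apply, Finsupp.single_apply]
  have s110 : (d - e11) 0 = d 0 - 1 := by
    simp [he11, Finsupp.tsub_apply, Finsupp.single_apply]
  have s111 : (d - e11) 1 = d 1 - 1 := by
    simp [he11, Finsupp.tsub_apply, Finsupp.single_apply]
  have hd1 : e1 ≤ d ↔ 1 ≤ d 0 := Finsupp.single_le_iff
  have hd2 : e2 ≤ d ↔ 2 ≤ d 0 := Finsupp.single_le_iff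
  have hd11 : e11 ≤ d ↔ 1 ≤ d 0 ∧ 1 ≤ d 1 := by
    rw [he11, Finsupp.le_def]
    constructor
    · intro h
      exact ⟨by simpa using h 0, by simpa using h 1⟩
    · rintro ⟨h0, h1⟩ s
      fin_cases s <;> simpa [Finsupp.single_apply]
  have hd0 : d = 0 ↔ d 0 = 0 ∧ d 1 = 0 := by
    constructor
    · rintro rfl; simp
    · rintro ⟨h0, h1⟩
      ext s; fin_cases s <;> simpa
  have hdeq1 : d = e1 ↔ d 0 = 1 ∧ d 1 = 0 := by
    constructor
    · rintro rfl; simp [he1, Finsupp.single_apply]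
    · rintro ⟨h0, h1⟩
      ext s; fin_cases s <;> simp [he1, Finsupp.single_apply] <;> assumption
  have hdeq11 : d = e11 ↔ d 0 = 1 ∧ d 1 = 1 := by
    constructor
    · rintro rfl; simp [he11, Finsupp.single_apply]
    · rintro ⟨h0, h1⟩
      ext s; fin_cases s <;> simp [he11, Finsupp.single_apply] <;> assumption
  simp only [hcA, s10, s11, s20, s21, s110, s111, hd1, hd2, hd11, hd0, hdeq1, hdeq11, one_mul]
  generalize d 0 = m
  generalize d 1 = n
  rcases n with _ | n
  · have h := key m 0
    simp only [mul_ite, mul_zero, one_mul] at h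
    simpa using h
  · have h := key m (n + 1)
    rw [show ((n+1:ℕ):ℤ) - 1 + 1 = ((n:ℕ):ℤ) + 1 from by push_cast; ring] at h
    simp only [mul_ite, mul_zero, one_mul] at h
    simpa using h
end

section
/- For every integer n ≥ 1, the number of permutations π of length n such that Flatten(π) contains no occurrence of the pattern 13-2 equals 2^{n-1}. -/
open Finset Polynomial

open Finset List Equiv

namespace FlatAux

variable {n : ℕ} (π : Equiv.Perm (Fin n))

lemma periodicPt (x : Fin n) : x ∈ Function.periodicPts π :=
  ⟨orderOf π, orderOf_pos π, by
    simp [Function.IsPeriodicPt, Function.IsFixedPt, ← Equiv.Perm.coe_pow, pow_orderOf_eq_one]⟩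

lemma period_pos (x : Fin n) : 0 < Function.minimalPeriod π x :=
  Function.minimalPeriod_pos_of_mem_periodicPts (periodicPt π x)

lemma pow_mod (x : Fin n) (k : ℕ) :
    (π ^ (k % Function.minimalPeriod π x)) x = (π ^ k) x :=
  Function.iterate_mod_minimalPeriod_eq

lemma pow_injOn (x : Fin n) :
    Set.InjOn (fun k => (π ^ k) x) (Set.Iio (Function.minimalPeriod π x)) :=
  Function.iterate_injOn_Iio_minimalPeriod

lemma pow_period (x : Fin n) : (π ^ Function.minimalPeriod π x) x = x :=
  Function.iterate_minimalPeriod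

lemma period_le (x : Fin n) : Function.minimalPeriod π x ≤ n := by
  have h := Finset.card_le_card_of_injOn (s := Finset.range (Function.minimalPeriod π x))
    (t := (Finset.univ : Finset (Fin n))) (fun k => (π ^ k) x)
    (fun a _ => Finset.mem_univ _)
    (fun a ha b hb hab => pow_injOn π x (by simpa using ha) (by simpa using hb) hab)
  simpa using h

/-- The orbit of `x` as a finset. -/
def orb (x : Fin n) : Finset (Fin n) := (Finset.range n).image (fun k => (π ^ k) x)

lemma mem_orb_iff {x y : Fin n} : y ∈ orb π x ↔ ∃ k, (π ^ k) x = y := by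
  constructor
  · rintro h; simp only [orb, Finset.mem_image, Finset.mem_range] at h
    obtain ⟨k, _, hk⟩ := h; exact ⟨k, hk⟩
  · rintro ⟨k, hk⟩
    simp only [orb, Finset.mem_image, Finset.mem_range]
    refine ⟨k % Function.minimalPeriod π x, ?_, by rw [pow_mod]; exact hk⟩
    exact lt_of_lt_of_le (Nat.mod_lt _ (period_pos π x)) (period_le π x)

lemma mem_orb_self (x : Fin n) : x ∈ orb π x := (mem_orb_iff π).2 ⟨0, rfl⟩

lemma pow_mem_orb (x : Fin n) (k : ℕ) : (π ^ k) x ∈ orb π x := (mem_orb_iff π).2 ⟨k, rfl⟩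

lemma orb_eq_of_mem {x y : Fin n} (h : y ∈ orb π x) : orb π y = orb π x := by
  obtain ⟨k, hk⟩ := (mem_orb_iff π).1 h
  have hback : ∃ j, (π ^ j) y = x := by
    set d := Function.minimalPeriod π x with hd
    refine ⟨d - k % d, ?_⟩
    rw [← hk, ← Equiv.Perm.mul_apply, ← pow_add]
    have h1 : d - k % d + k = d * (1 + k / d) := by
      have h2 := Nat.mod_add_div k d
      have h3 : k % d < d := Nat.mod_lt _ (period_pos π x)
      rw [Nat.mul_add, Nat.mul_one]
      omega
    rw [h1, ← pow_mod π x, Nat.mul_mod_right, pow_zero, Equiv.Perm.one_apply]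
  obtain ⟨j, hj⟩ := hback
  apply Finset.Subset.antisymm
  · intro z hz
    obtain ⟨i, hi⟩ := (mem_orb_iff π).1 hz
    exact (mem_orb_iff π).2 ⟨i + k, by rw [pow_add, Equiv.Perm.mul_apply, hk, hi]⟩
  · intro z hz
    obtain ⟨i, hi⟩ := (mem_orb_iff π).1 hz
    exact (mem_orb_iff π).2 ⟨i + j, by rw [pow_add, Equiv.Perm.mul_apply, hj, hi]⟩

/-- `x` is the minimum of its cycle. -/
def IsMin (m : Fin n) : Prop := ∀ k < n, m ≤ (π ^ k) m

lemma isMin_iff {m : Fin n} : IsMin π m ↔ ∀ y ∈ orb π m, m ≤ y := by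
  constructor
  · intro h y hy
    obtain ⟨k, hk, hky⟩ := by
      simpa only [orb, Finset.mem_image, Finset.mem_range] using hy
    exact hky ▸ h k hk
  · intro h k hk
    exact h _ (by simp only [orb, Finset.mem_image, Finset.mem_range]; exact ⟨k, hk, rfl⟩)

/-- The minimum of the orbit of `x`. -/
def mu (x : Fin n) : Fin n := (orb π x).min' ⟨x, mem_orb_self π x⟩

lemma mu_mem_orb (x : Fin n) : mu π x ∈ orb π x := Finset.min'_mem _ _

lemma orb_mu (x : Fin n) : orb π (mu π x) = orb π x := orb_eq_of_mem π (mu_mem_orb π x)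

lemma mu_isMin (x : Fin n) : IsMin π (mu π x) := by
  rw [isMin_iff, orb_mu]
  exact fun y hy => Finset.min'_le _ _ hy

lemma IsMin.eq_mu {m : Fin n} (h : IsMin π m) : mu π m = m := by
  have h1 : mu π m ∈ orb π m := mu_mem_orb π m
  exact le_antisymm (Finset.min'_le _ _ (mem_orb_self π m)) ((isMin_iff π).1 h _ h1)

lemma isMin_unique {m m' : Fin n} (h : IsMin π m) (h' : IsMin π m')
    (horb : orb π m = orb π m') : m = m' := by
  have h1 : mu π m = mu π m' := by unfold mu; congr 1
  rw [h.eq_mu, h'.eq_mu] at h1; exact h1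

lemma mu_mem_of_mem {x y : Fin n} (h : y ∈ orb π x) : mu π x = mu π y := by
  unfold mu; congr 1; exact (orb_eq_of_mem π h).symm


lemma cycleList_length (x : Fin n) : (cycleList π x).length = Function.minimalPeriod π x := by
  simp [cycleList]

lemma cycleList_get (x : Fin n) (k : ℕ) (hk : k < (cycleList π x).length) :
    (cycleList π x).get ⟨k, hk⟩ = (π ^ k) x := by
  simp [cycleList]

lemma mem_cycleList_iff {x y : Fin n} : y ∈ cycleList π x ↔ y ∈ orb π x := by
  simp only [cycleList, List.mem_map, List.mem_range]
  constructor
  · rintro ⟨k, hk, rfl⟩; exact pow_mem_orb π x k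
  · intro h
    obtain ⟨k, hk⟩ := (mem_orb_iff π).1 h
    exact ⟨k % Function.minimalPeriod π x, Nat.mod_lt _ (period_pos π x),
      by rw [pow_mod]; exact hk⟩

lemma cycleList_nodup (x : Fin n) : (cycleList π x).Nodup := by
  unfold cycleList
  refine List.Nodup.map_on ?_ List.nodup_range
  intro a ha b hb hab
  exact pow_injOn π x (by simpa using ha) (by simpa using hb) hab

lemma mem_cycleMins {m : Fin n} : m ∈ cycleMins π ↔ IsMin π m := by
  simp only [cycleMins, Finset.mem_sort, Finset.mem_filter, Finset.mem_univ, true_and]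
  rfl

lemma cycleMins_sorted : List.Pairwise (· < ·) (cycleMins π) := (Finset.sortedLT_sort _).pairwise

/-- The flattened list of cycle lists, before relabelling. -/
noncomputable def body : List (Fin n) := ((cycleMins π).map (cycleList π)).flatten

lemma mem_body (y : Fin n) : y ∈ body π := by
  rw [body, List.mem_flatten]
  refine ⟨cycleList π (mu π y), List.mem_map_of_mem ((mem_cycleMins π).2 (mu_isMin π y)), ?_⟩
  rw [mem_cycleList_iff, orb_mu]
  exact mem_orb_self π y

lemma isMin_eq_of_mem_orb {m m' : Fin n} (h : IsMin π m) (h' : IsMin π m')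
    (hm : m' ∈ orb π m) : m = m' :=
  isMin_unique π h h' (orb_eq_of_mem π hm).symm

lemma body_nodup : (body π).Nodup := by
  rw [body, List.nodup_flatten]
  constructor
  · intro l hl
    obtain ⟨m, _, rfl⟩ := List.mem_map.1 hl
    exact cycleList_nodup π m
  · rw [List.pairwise_iff_get]
    intro i j hij y hy hy'
    have hlen : ((cycleMins π).map (cycleList π)).length = (cycleMins π).length := by simp
    have hi : (((cycleMins π).map (cycleList π)).get i)
        = cycleList π ((cycleMins π).get (Fin.cast hlen i)) := by
      simp [List.getElem_map]
    have hj : (((cycleMins π).map (cycleList π)).get j)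
        = cycleList π ((cycleMins π).get (Fin.cast hlen j)) := by
      simp [List.getElem_map]
    rw [hi, mem_cycleList_iff] at hy
    rw [hj, mem_cycleList_iff] at hy'
    set a := (cycleMins π).get (Fin.cast hlen i)
    set b := (cycleMins π).get (Fin.cast hlen j)
    have ha : IsMin π a := (mem_cycleMins π).1 (List.get_mem _ _)
    have hb : IsMin π b := (mem_cycleMins π).1 (List.get_mem _ _)
    have hab : a < b := by
      have := List.pairwise_iff_get.1 (cycleMins_sorted π) (Fin.cast hlen i) (Fin.cast hlen j)
        (by simpa using hij)
      exact this
    have : a = b := isMin_unique π ha hb (by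
      rw [← orb_eq_of_mem π hy, ← orb_eq_of_mem π hy'])
    exact absurd this hab.ne

lemma body_perm : (body π).Perm (List.finRange n) :=
  (List.perm_ext_iff_of_nodup (body_nodup π) (List.nodup_finRange n)).2
    (fun a => by simp [mem_body, List.mem_finRange])

lemma body_length : (body π).length = n := by
  simpa using (body_perm π).length_eq


/-- The elementary predicate: `π x ≤ x + 1` for all `x`. -/
def Pred (π : Equiv.Perm (Fin n)) : Prop := ∀ x : Fin n, ((π x : ℕ)) ≤ (x : ℕ) + 1

lemma pow_succ_apply (x : Fin n) (k : ℕ) : (π ^ (k + 1)) x = π ((π ^ k) x) := by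
  rw [pow_succ', Equiv.Perm.mul_apply]

lemma chain'_finRange :
    List.IsChain (fun a b : Fin n => (b : ℕ) = (a : ℕ) + 1) (List.finRange n) := by
  rw [List.isChain_iff_getElem]
  intro i h
  simp only [List.getElem_finRange, Fin.coe_cast]

lemma mem_cycleList_exists {x y : Fin n} (h : y ∈ cycleList π x) :
    ∃ k < Function.minimalPeriod π x, (π ^ k) x = y := by
  simpa [cycleList, List.mem_map, List.mem_range] using h

lemma pred_of_body_eq (h : body π = List.finRange n) : Pred π := by
  intro x
  set m := mu π x with hm
  have hmin : IsMin π m := mu_isMin π x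
  have hx : x ∈ cycleList π m := by
    rw [mem_cycleList_iff, orb_mu]; exact mem_orb_self π x
  obtain ⟨k, hk, hkx⟩ := mem_cycleList_exists π hx
  have hpix : π x = (π ^ (k + 1)) m := by rw [pow_succ_apply, hkx]
  by_cases hlast : k + 1 = Function.minimalPeriod π m
  · have h1 : π x = m := by rw [hpix, hlast, pow_period]
    have h2 : m ≤ x := (isMin_iff π).1 hmin x (by rw [orb_mu]; exact mem_orb_self π x)
    rw [h1]; omega
  · have hk1 : k + 1 < Function.minimalPeriod π m := lt_of_le_of_ne (Nat.succ_le_of_lt hk) hlast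
    have hinf : (cycleList π m) <:+: body π :=
      List.infix_of_mem_flatten (List.mem_map_of_mem ((mem_cycleMins π).2 hmin))
    have hch : List.IsChain (fun a b : Fin n => (b : ℕ) = (a : ℕ) + 1) (cycleList π m) :=
      (chain'_finRange).infix (h ▸ hinf)
    have hc := List.isChain_iff_getElem.1 hch k (by rw [cycleList_length]; omega)
    simp only [cycleList, List.getElem_map, List.getElem_range] at hc
    rw [hpix, hc, hkx]

lemma pow_val (h : Pred π) {m : Fin n} (hmin : IsMin π m) :
    ∀ k < Function.minimalPeriod π m, (((π ^ k) m : ℕ)) = (m : ℕ) + k := by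
  intro k
  induction k using Nat.strong_induction_on with
  | _ k ih =>
    intro hk
    match k with
    | 0 => simp
    | (k+1) =>
      have hy : ((π ^ k) m : ℕ) = (m : ℕ) + k := ih k (by omega) (by omega)
      have h1 : ((π ^ (k + 1)) m : ℕ) ≤ (m : ℕ) + k + 1 := by
        have hp := h ((π ^ k) m)
        rw [hy] at hp
        rw [pow_succ_apply]; omega
      have h2 : (m : ℕ) ≤ ((π ^ (k + 1)) m : ℕ) := by
        have := (isMin_iff π).1 hmin _ (pow_mem_orb π m (k + 1))
        exact this
      by_contra hne
      have hlt : ((π ^ (k + 1)) m : ℕ) < (m : ℕ) + (k + 1) := by omega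
      set j := ((π ^ (k + 1)) m : ℕ) - (m : ℕ) with hj
      have hjk : j ≤ k := by omega
      have hjv : ((π ^ j) m : ℕ) = (m : ℕ) + j := ih j (by omega) (by omega)
      have heq : (π ^ j) m = (π ^ (k + 1)) m := Fin.ext (by omega)
      have := pow_injOn π m (Set.mem_Iio.2 (by omega : j < Function.minimalPeriod π m))
        (Set.mem_Iio.2 hk) heq
      omega

lemma cross (h : Pred π) {a b : Fin n} (ha : IsMin π a) (hb : IsMin π b) (hab : a < b) :
    ∀ y ∈ cycleList π a, ∀ z ∈ cycleList π b, y < z := by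
  have hblock : (a : ℕ) + Function.minimalPeriod π a ≤ (b : ℕ) := by
    by_contra hcon
    push_neg at hcon
    set j := (b : ℕ) - (a : ℕ) with hj
    have hjd : j < Function.minimalPeriod π a := by omega
    have hjv : ((π ^ j) a : ℕ) = (a : ℕ) + j := pow_val π h ha j hjd
    have hba : (a:ℕ) ≤ (b:ℕ) := le_of_lt hab
    have heq : (π ^ j) a = b := Fin.ext (by omega)
    have : a = b := isMin_eq_of_mem_orb π ha hb (heq ▸ pow_mem_orb π a j)
    exact absurd this hab.ne
  intro y hy z hz
  obtain ⟨k, hk, rfl⟩ := mem_cycleList_exists π hy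
  obtain ⟨k', hk', rfl⟩ := mem_cycleList_exists π hz
  have h1 : ((π ^ k) a : ℕ) = (a : ℕ) + k := pow_val π h ha k hk
  have h2 : ((π ^ k') b : ℕ) = (b : ℕ) + k' := pow_val π h hb k' hk'
  have : ((π ^ k) a : ℕ) < ((π ^ k') b : ℕ) := by omega
  exact this

lemma body_sorted_of_pred (h : Pred π) : List.Pairwise (· < ·) (body π) := by
  rw [body, List.pairwise_flatten]
  constructor
  · intro l hl
    obtain ⟨m, hm, rfl⟩ := List.mem_map.1 hl
    have hmin := (mem_cycleMins π).1 hm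
    rw [List.pairwise_iff_get]
    intro i j hij
    have hlen : (cycleList π m).length = Function.minimalPeriod π m := cycleList_length π m
    have h1 : (((cycleList π m).get i) : ℕ) = (m : ℕ) + (i : ℕ) := by
      have hv := pow_val π h hmin i (by rw [← hlen]; exact i.isLt)
      rw [← hv, ← cycleList_get π m i i.isLt]
    have h2 : (((cycleList π m).get j) : ℕ) = (m : ℕ) + (j : ℕ) := by
      have hv := pow_val π h hmin j (by rw [← hlen]; exact j.isLt)
      rw [← hv, ← cycleList_get π m j j.isLt]
    have hij' : (i : ℕ) < (j : ℕ) := hij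
    exact Fin.lt_def.2 (by omega)
  · rw [List.pairwise_iff_get]
    intro i j hij
    have hlen : ((cycleMins π).map (cycleList π)).length = (cycleMins π).length := by simp
    have hi : (((cycleMins π).map (cycleList π)).get i)
        = cycleList π ((cycleMins π).get (Fin.cast hlen i)) := by
      simp [List.getElem_map]
    have hj : (((cycleMins π).map (cycleList π)).get j)
        = cycleList π ((cycleMins π).get (Fin.cast hlen j)) := by
      simp [List.getElem_map]
    rw [hi, hj]
    set a := (cycleMins π).get (Fin.cast hlen i)
    set b := (cycleMins π).get (Fin.cast hlen j)
    have ha : IsMin π a := (mem_cycleMins π).1 (List.get_mem _ _)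
    have hb : IsMin π b := (mem_cycleMins π).1 (List.get_mem _ _)
    have hab : a < b :=
      List.pairwise_iff_get.1 (cycleMins_sorted π) (Fin.cast hlen i) (Fin.cast hlen j)
        (by simpa using hij)
    exact cross π h ha hb hab

lemma body_eq_of_pred (h : Pred π) : body π = List.finRange n := by
  haveI : IsAntisymm (Fin n) (· ≤ ·) := ⟨fun _ _ => le_antisymm⟩
  refine List.Perm.eq_of_pairwise' (r := (· ≤ ·)) ?_ ?_ (body_perm π)
  · exact (body_sorted_of_pred π h).imp le_of_lt
  · refine List.Pairwise.imp le_of_lt ?_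
    rw [List.pairwise_iff_get]
    intro i j hij
    rw [List.get_finRange, List.get_finRange]
    exact Fin.mk_lt_mk.2 hij

lemma pred_iff_body (π : Equiv.Perm (Fin n)) : Pred π ↔ body π = List.finRange n :=
  ⟨body_eq_of_pred π, pred_of_body_eq π⟩


/-- The identity word `1, 2, …, N`. -/
def idWord (N : ℕ) : List ℕ := (List.range N).map (· + 1)

lemma val_succ_injective : Function.Injective (fun m : Fin n => (m : ℕ) + 1) := by
  intro a b hab
  simp only [] at hab
  exact Fin.ext (by omega)

lemma coeList_eq (l : List (Fin n)) : (do let a ← l; pure ((a : ℕ)) : List ℕ) = l.map Fin.val := by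
  simp only [List.pure_def, List.bind_eq_flatMap]
  induction l with
  | nil => rfl
  | cons a t ih => simp [List.flatMap_cons, ih]

lemma flattenPerm_eq : flattenPerm π = (body π).map (fun m : Fin n => (m : ℕ) + 1) := by
  show List.map _ (do let a ← (body π); pure ((a : ℕ))) = _
  rw [coeList_eq, List.map_map]
  rfl

lemma finRange_map : (List.finRange n).map (fun m : Fin n => (m : ℕ) + 1) = idWord n := by
  apply List.ext_get (by simp [idWord])
  intro i h1 h2
  simp [idWord, List.get_finRange]

lemma flatten_eq_idWord_iff : flattenPerm π = idWord n ↔ body π = List.finRange n := by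
  constructor
  · intro h
    apply List.map_injective_iff.2 (val_succ_injective (n := n))
    rw [← flattenPerm_eq, h, ← finRange_map]
  · intro h; rw [flattenPerm_eq, h, finRange_map]

lemma flatten_perm_idWord : (flattenPerm π).Perm (idWord n) := by
  rw [flattenPerm_eq, ← finRange_map]; exact (body_perm π).map _

lemma body_head (hn : 0 < n) : ∃ t, body π = (⟨0, hn⟩ : Fin n) :: t := by
  have h0 : IsMin π ⟨0, hn⟩ := by
    intro k hk
    rw [Fin.le_def]; exact Nat.zero_le _
  have hmem : (⟨0, hn⟩ : Fin n) ∈ cycleMins π := (mem_cycleMins π).2 h0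
  obtain ⟨a, t, hat⟩ := List.exists_cons_of_ne_nil (List.ne_nil_of_mem hmem)
  have ha : a = ⟨0, hn⟩ := by
    have hs := cycleMins_sorted π
    rw [hat] at hs hmem
    rcases List.mem_cons.1 hmem with h | h
    · exact h.symm
    · have hlt := (List.pairwise_cons.1 hs).1 _ h
      exact absurd hlt (by simp [Fin.lt_def])
  subst ha
  obtain ⟨e, he⟩ : ∃ e, Function.minimalPeriod π (⟨0, hn⟩ : Fin n) = e + 1 :=
    ⟨_, (Nat.succ_pred_eq_of_pos (period_pos π _)).symm⟩
  have hcl : ∃ s, cycleList π (⟨0, hn⟩ : Fin n) = (⟨0, hn⟩ : Fin n) :: s := by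
    refine ⟨(List.range e).map (fun k => (π ^ (k + 1)) ⟨0, hn⟩), ?_⟩
    rw [cycleList, he, List.range_succ_eq_map, List.map_cons, List.map_map]
    simp [Function.comp_def]
  obtain ⟨s, hs⟩ := hcl
  refine ⟨s ++ ((t.map (cycleList π)).flatten), ?_⟩
  rw [body, hat, List.map_cons, List.flatten_cons, hs, List.cons_append]

lemma flatten_head (hn : 0 < n) : (flattenPerm π).getD 0 0 = 1 := by
  obtain ⟨t, ht⟩ := body_head π hn
  rw [flattenPerm_eq, ht]
  simp

lemma idWord_getD {N i : ℕ} (h : i < N) : (idWord N).getD i 0 = i + 1 := by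
  rw [List.getD_eq_getElem _ _ (by simp [idWord]; omega)]
  simp [idWord]

lemma occ_idWord (N : ℕ) : occ (idWord N) = 0 := by
  rw [occ, Finset.card_eq_zero, Finset.eq_empty_iff_forall_notMem]
  rintro ⟨i, j⟩ hmem
  simp only [Finset.mem_filter, Finset.mem_product, Finset.mem_range] at hmem
  obtain ⟨⟨hi, hj⟩, h1, h2, h3, h4⟩ := hmem
  have hlen : (idWord N).length = N := by simp [idWord]
  rw [hlen] at hi hj
  rw [idWord_getD hj, idWord_getD hi] at h4
  omega

lemma eq_idWord_of_occ_zero {N : ℕ} {w : List ℕ} (hN : 0 < N) (hperm : w.Perm (idWord N))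
    (hhead : w.getD 0 0 = 1) (hocc : occ w = 0) : w = idWord N := by
  have hlen : w.length = N := by simpa [idWord] using hperm.length_eq
  have hnodup : w.Nodup :=
    (hperm.nodup_iff).2 ((List.nodup_range (n := N)).map (fun a b hab => by omega))
  have hmemw : ∀ v, v ∈ w ↔ (1 ≤ v ∧ v ≤ N) := by
    intro v
    rw [hperm.mem_iff]
    simp only [idWord, List.mem_map, List.mem_range]
    constructor
    · rintro ⟨k, hk, rfl⟩; omega
    · rintro ⟨h1, h2⟩; exact ⟨v - 1, by omega, by omega⟩
  have hget : ∀ i (hi : i < N), w.getD i 0 = w[i]'(by omega) := by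
    intro i hi
    rw [List.getD_eq_getElem _ _ (by omega)]
  have claim : ∀ i, i < N → w.getD i 0 = i + 1 := by
    intro i
    induction i using Nat.strong_induction_on with
    | _ i ih =>
      intro hi
      rcases Nat.eq_zero_or_pos i with rfl | hipos
      · exact hhead
      have hwi : w.getD i 0 ∈ w := by rw [hget i hi]; exact List.getElem_mem _
      have hbounds := (hmemw _).1 hwi
      have hge : i + 1 ≤ w.getD i 0 := by
        by_contra hcon
        push_neg at hcon
        have hv1 : 1 ≤ w.getD i 0 := hbounds.1
        have hvidx : w.getD (w.getD i 0 - 1) 0 = w.getD i 0 := by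
          have := ih (w.getD i 0 - 1) (by omega) (by omega)
          omega
        have hlt1 : w.getD i 0 - 1 < w.length := by omega
        have hlt2 : i < w.length := by omega
        have heq : w[(w.getD i 0 - 1)]'hlt1 = w[i]'hlt2 := by
          rw [← hget _ (by omega), ← hget _ hi, hvidx]
        have := (List.Nodup.getElem_inj_iff hnodup).1 heq
        omega
      rcases Nat.lt_or_ge (i + 1) (w.getD i 0) with hgt | hle2
      · exfalso
        have hmem1 : (i + 1) ∈ w := (hmemw _).2 ⟨by omega, by omega⟩
        obtain ⟨j, hjlen, hjv⟩ := List.mem_iff_getElem.1 hmem1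
        have hjN : j < N := by omega
        have hjD : w.getD j 0 = i + 1 := by rw [hget j hjN]; exact hjv
        have hij : i < j := by
          rcases lt_trichotomy j i with hlt | heq | hgt'
          · have := ih j (by omega) (by omega)
            omega
          · subst heq; omega
          · exact hgt'
        have hprev : w.getD (i - 1) 0 = i := by
          have := ih (i - 1) (by omega) (by omega)
          omega
        have : ((i, j) : ℕ × ℕ) ∈ (Finset.range w.length ×ˢ Finset.range w.length).filter
            (fun p : ℕ × ℕ => 1 ≤ p.1 ∧ p.1 < p.2 ∧
              w.getD (p.1 - 1) 0 < w.getD p.2 0 ∧ w.getD p.2 0 < w.getD p.1 0) := by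
          simp only [Finset.mem_filter, Finset.mem_product, Finset.mem_range]
          refine ⟨⟨by omega, by omega⟩, by omega, hij, ?_, ?_⟩
          · rw [hprev, hjD]; omega
          · rw [hjD]; omega
        rw [occ, Finset.card_eq_zero, Finset.eq_empty_iff_forall_notMem] at hocc
        exact hocc _ this
      · omega
  refine List.ext_getElem (by simp [idWord, hlen]) ?_
  intro i h1 h2
  have hiN : i < N := by omega
  calc w[i] = w.getD i 0 := (hget i hiN).symm
    _ = i + 1 := claim i hiN
    _ = (idWord N).getD i 0 := (idWord_getD hiN).symm
    _ = (idWord N)[i] := List.getD_eq_getElem _ _ h2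

lemma occ_zero_iff (hn : 0 < n) : occ (flattenPerm π) = 0 ↔ Pred π := by
  rw [pred_iff_body, ← flatten_eq_idWord_iff]
  constructor
  · intro h
    exact eq_idWord_of_occ_zero hn (flatten_perm_idWord π) (flatten_head π hn) h
  · intro h; rw [h]; exact occ_idWord n


instance decPred {N : ℕ} : DecidablePred (fun π : Equiv.Perm (Fin N) => Pred π) := fun π =>
  decidable_of_iff (∀ x : Fin N, ((π x : ℕ)) ≤ (x : ℕ) + 1) Iff.rfl

/-- Decomposition of a permutation of `Fin (m+1)` at the last point. -/
def E (m : ℕ) : Equiv.Perm (Fin (m + 1)) ≃ Option (Fin m) × Equiv.Perm (Fin m) :=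
  (finSuccEquivLast.permCongr).trans Equiv.Perm.decomposeOption

lemma Esymm_apply (m : ℕ) (t : Option (Fin m)) (σ : Equiv.Perm (Fin m)) (x : Fin (m + 1)) :
    (E m).symm (t, σ) x
      = finSuccEquivLast.symm ((Equiv.swap none t) (Option.map σ (finSuccEquivLast x))) := by
  rw [E, Equiv.symm_trans_apply, Equiv.permCongr_symm, Equiv.permCongr_apply,
    Equiv.symm_symm, Equiv.Perm.decomposeOption_symm_apply, Equiv.Perm.mul_apply]
  rfl

lemma Esymm_last (m : ℕ) (t : Option (Fin m)) (σ : Equiv.Perm (Fin m)) :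
    (E m).symm (t, σ) (Fin.last m) = finSuccEquivLast.symm t := by
  rw [Esymm_apply, finSuccEquivLast_last]
  simp

lemma Esymm_castSucc_of_eq (m : ℕ) {t : Option (Fin m)} {σ : Equiv.Perm (Fin m)} {i : Fin m}
    (h : t = some (σ i)) : (E m).symm (t, σ) (Fin.castSucc i) = Fin.last m := by
  rw [Esymm_apply, finSuccEquivLast_castSucc]
  simp [h, Equiv.swap_apply_right]

lemma Esymm_castSucc_of_ne (m : ℕ) {t : Option (Fin m)} {σ : Equiv.Perm (Fin m)} {i : Fin m}
    (h : t ≠ some (σ i)) : (E m).symm (t, σ) (Fin.castSucc i) = Fin.castSucc (σ i) := by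
  rw [Esymm_apply, finSuccEquivLast_castSucc]
  rw [Option.map_some, Equiv.swap_apply_of_ne_of_ne (by simp) (Ne.symm h)]
  simp

lemma forall_fin_succ_iff {m : ℕ} {Pp : Fin (m + 1) → Prop} :
    (∀ x, Pp x) ↔ Pp (Fin.last m) ∧ ∀ i : Fin m, Pp (Fin.castSucc i) :=
  ⟨fun h => ⟨h _, fun i => h _⟩, fun ⟨h1, h2⟩ x => Fin.lastCases h1 h2 x⟩

lemma pred_Esymm_iff {m : ℕ} (hm : 0 < m) (t : Option (Fin m)) (σ : Equiv.Perm (Fin m)) :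
    Pred ((E m).symm (t, σ))
      ↔ ((t = none ∨ t = some (σ ⟨m - 1, by omega⟩)) ∧ Pred σ) := by
  set L : Fin m := ⟨m - 1, by omega⟩ with hL
  rw [Pred, forall_fin_succ_iff]
  rcases t with _ | u
  · have h1 : (E m).symm (none, σ) (Fin.last m) = Fin.last m := by
      rw [Esymm_last]; simp
    have h2 : ∀ i : Fin m, (E m).symm (none, σ) (Fin.castSucc i) = Fin.castSucc (σ i) :=
      fun i => Esymm_castSucc_of_ne m (by simp)
    simp only [h1, h2]
    constructor
    · rintro ⟨-, h⟩
      exact ⟨by simp, fun i => by simpa using h i⟩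
    · rintro ⟨-, h⟩
      exact ⟨by omega, fun i => by simpa using h i⟩
  · have h1 : (E m).symm (some u, σ) (Fin.last m) = Fin.castSucc u := by
      rw [Esymm_last]; simp
    simp only [h1]
    constructor
    · rintro ⟨-, h⟩
      have hL' : σ (σ.symm u) = u := σ.apply_symm_apply u
      have hcond : ((E m).symm (some u, σ)) (Fin.castSucc (σ.symm u)) = Fin.last m :=
        Esymm_castSucc_of_eq m (by rw [hL'])
      have hle := h (σ.symm u)
      rw [hcond] at hle
      have hlast : (σ.symm u : ℕ) = m - 1 := by
        have h1 := (σ.symm u).isLt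
        have h2 : (Fin.last m : ℕ) = m := rfl
        have h3 : ((Fin.castSucc (σ.symm u)) : ℕ) = (σ.symm u : ℕ) := rfl
        omega
      have hLeq : σ.symm u = L := Fin.ext hlast
      have huL : u = σ L := by rw [← hLeq, hL']
      refine ⟨Or.inr (by rw [huL]), ?_⟩
      intro i
      by_cases hiu : σ i = u
      · have hiL : i = L := σ.injective (by rw [hiu, huL])
        have hiv : (i : ℕ) = m - 1 := by rw [hiL]
        have hlt : (σ i : ℕ) < m := (σ i).isLt
        omega
      · have hne : (some u : Option (Fin m)) ≠ some (σ i) :=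
          fun hc => hiu (Option.some_injective _ hc).symm
        have := h i
        rw [Esymm_castSucc_of_ne m hne] at this
        simpa using this
    · rintro ⟨hu, hσ⟩
      rcases hu with hu | hu
      · exact absurd hu (by simp)
      have huv : u = σ L := Option.some_injective _ hu
      refine ⟨by
        have h5 : ((Fin.castSucc u) : ℕ) = (u : ℕ) := rfl
        have h6 : ((Fin.last m) : ℕ) = m := rfl
        have h7 := u.isLt
        omega, ?_⟩
      intro i
      by_cases hiu : σ i = u
      · rw [Esymm_castSucc_of_eq m (by rw [hiu])]
        have hiL : i = L := σ.injective (by rw [hiu, huv])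
        have hiv : (i : ℕ) = m - 1 := by rw [hiL]
        have hlv : ((Fin.last m) : ℕ) = m := rfl
        have hcs : ((Fin.castSucc i) : ℕ) = (i : ℕ) := rfl
        omega
      · have hne : (some u : Option (Fin m)) ≠ some (σ i) :=
          fun hc => hiu (Option.some_injective _ hc).symm
        rw [Esymm_castSucc_of_ne m hne]
        simpa using hσ i

lemma count_step (m : ℕ) (hm : 0 < m) :
    ((Finset.univ : Finset (Equiv.Perm (Fin (m + 1)))).filter (fun π => Pred π)).card
      = 2 * ((Finset.univ : Finset (Equiv.Perm (Fin m))).filter (fun σ => Pred σ)).card := by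
  classical
  set L : Fin m := ⟨m - 1, by omega⟩ with hL
  have hcard : ((Finset.univ : Finset (Equiv.Perm (Fin (m + 1)))).filter (fun π => Pred π)).card
      = (Finset.univ.filter (fun p : Option (Fin m) × Equiv.Perm (Fin m) =>
          (p.1 = none ∨ p.1 = some (p.2 L)) ∧ Pred p.2)).card := by
    apply Finset.card_bij' (fun π _ => (E m) π) (fun p _ => (E m).symm p)
    · intro π hπ
      simp only [Finset.mem_filter, Finset.mem_univ, true_and] at hπ ⊢
      have h2 : Pred ((E m).symm ((E m) π)) := by rw [Equiv.symm_apply_apply]; exact hπ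
      have h3 := (pred_Esymm_iff hm ((E m) π).1 ((E m) π).2).1 (by
        rw [← Prod.mk.eta (p := (E m) π)] at h2; exact h2)
      exact h3
    · intro p hp
      simp only [Finset.mem_filter, Finset.mem_univ, true_and] at hp ⊢
      have := (pred_Esymm_iff hm p.1 p.2).2 hp
      rw [← Prod.mk.eta (p := p)]
      exact this
    · intro π _; exact (E m).symm_apply_apply π
    · intro p _; exact (E m).apply_symm_apply p
  rw [hcard]
  have hsplit : (Finset.univ.filter (fun p : Option (Fin m) × Equiv.Perm (Fin m) =>
        (p.1 = none ∨ p.1 = some (p.2 L)) ∧ Pred p.2))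
      = ((Finset.univ : Finset (Equiv.Perm (Fin m))).filter (fun σ => Pred σ)).biUnion
          (fun σ => ({(none, σ), (some (σ L), σ)} : Finset (Option (Fin m) × Equiv.Perm (Fin m)))) := by
    ext p
    simp only [Finset.mem_filter, Finset.mem_univ, true_and, Finset.mem_biUnion,
      Finset.mem_insert, Finset.mem_singleton]
    constructor
    · rintro ⟨h1 | h1, h2⟩
      · exact ⟨p.2, h2, Or.inl (by rw [← h1])⟩
      · exact ⟨p.2, h2, Or.inr (by rw [← h1])⟩
    · rintro ⟨σ, hσ, h | h⟩ <;> subst h <;> simp [hσ]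
  rw [hsplit, Finset.card_biUnion]
  · have hpair : ∀ σ ∈ ((Finset.univ : Finset (Equiv.Perm (Fin m))).filter (fun σ => Pred σ)),
        (({(none, σ), (some (σ L), σ)} : Finset (Option (Fin m) × Equiv.Perm (Fin m)))).card = 2 := by
      intro σ _
      rw [Finset.card_insert_of_notMem (by simp), Finset.card_singleton]
    rw [Finset.sum_congr rfl hpair, Finset.sum_const, smul_eq_mul, mul_comm]
  · intro x hx y hy hxy
    rw [Function.onFun, Finset.disjoint_left]
    rintro p hp hq
    apply hxy
    have h1 : p.2 = x := by
      rcases Finset.mem_insert.1 hp with h | h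
      · rw [h]
      · rw [Finset.mem_singleton] at h; rw [h]
    have h2 : p.2 = y := by
      rcases Finset.mem_insert.1 hq with h | h
      · rw [h]
      · rw [Finset.mem_singleton] at h; rw [h]
    rw [← h1, h2]

lemma count_pred : ∀ N : ℕ, 0 < N →
    ((Finset.univ : Finset (Equiv.Perm (Fin N))).filter (fun π => Pred π)).card = 2 ^ (N - 1) := by
  intro N
  induction N with
  | zero => omega
  | succ M ih =>
    intro _
    rcases Nat.eq_zero_or_pos M with rfl | hM
    · have h1 : ((Finset.univ : Finset (Equiv.Perm (Fin 1))).filter (fun π => Pred π))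
          = Finset.univ := by
        apply Finset.filter_true_of_mem
        intro π _ x
        have hx : π x = x := Subsingleton.elim _ _
        rw [hx]; omega
      rw [h1]
      simp [Finset.card_univ, Fintype.card_perm]
    · have h4 : 2 * 2 ^ (M - 1) = 2 ^ (M + 1 - 1) := by
        have h3 : M + 1 - 1 = M - 1 + 1 := by omega
        rw [h3, pow_succ]
        ring
      rw [count_step M hM, ih hM, h4]

end FlatAux

/-- For every `n ≥ 1`, the number of permutations `π` of length `n` such that
`Flatten(π)` avoids the pattern 13-2 equals `2^{n-1}`. -/
theorem card_avoiders (n : ℕ) (hn : 1 ≤ n) :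
    ((Finset.univ : Finset (Equiv.Perm (Fin n))).filter
        (fun π => occ (flattenPerm π) = 0)).card = 2 ^ (n - 1) := by
  have h1 : ((Finset.univ : Finset (Equiv.Perm (Fin n))).filter
        (fun π => occ (flattenPerm π) = 0))
      = (Finset.univ.filter (fun π : Equiv.Perm (Fin n) => FlatAux.Pred π)) := by
    apply Finset.filter_congr
    intro π _
    exact FlatAux.occ_zero_iff π hn
  rw [h1]
  exact FlatAux.count_pred n hn
end

section
/- For every integer n ≥ 2, one has Σ_{j=1}^{n-1} ((n−1+j)/j)·C(n−2, j−1)·(−1)^{j-1}·2^{n-j} = 2^n. -/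
open Finset Polynomial

/-- For every `n ≥ 2`,
`Σ_{j=1}^{n-1} ((n−1+j)/j)·C(n−2,j−1)·(−1)^{j-1}·2^{n−j} = 2ⁿ`. -/
theorem alternating_binomial_identity (n : ℕ) (hn : 2 ≤ n) :
    ∑ j ∈ Finset.Icc 1 (n - 1),
        ((n : ℚ) - 1 + (j : ℚ)) / (j : ℚ) * ((n - 2).choose (j - 1) : ℚ)
          * (-1) ^ (j - 1) * 2 ^ (n - j)
      = 2 ^ n := by
  obtain ⟨m, rfl⟩ : ∃ m, n = m + 2 := ⟨n - 2, by omega⟩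
  have hS1 : ∑ k ∈ Finset.range (m+1), (-1:ℚ)^k * 2^(m-k) * (m.choose k) = 1 := by
    have := (Commute.all (-1 : ℚ) 2).add_pow m
    norm_num at this
    rw [← this]
  have hS2 : ∑ k ∈ Finset.range (m+2), (-1:ℚ)^k * 2^(m+1-k) * ((m+1).choose k) = 1 := by
    have := (Commute.all (-1 : ℚ) 2).add_pow (m+1)
    norm_num at this
    rw [← this]
  have hT : ∑ i ∈ Finset.range (m+1), (-1:ℚ)^(i+1) * 2^(m-i) * ((m+1).choose (i+1))
      = 1 - 2^(m+1) := by
    rw [Finset.sum_range_succ'] at hS2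
    simp only [Nat.choose_zero_right, pow_zero, Nat.sub_zero, Nat.cast_one, mul_one, one_mul,
      Nat.succ_sub_succ] at hS2
    linarith [hS2]
  have hIcc : m + 2 - 1 = m + 1 := by omega
  rw [hIcc, ← Finset.Ico_add_one_right_eq_Icc, Finset.sum_Ico_eq_sum_range]
  have hrange : m + 1 + 1 - 1 = m + 1 := by omega
  rw [hrange]
  have key : ∀ i ∈ Finset.range (m+1),
      (((m+2 : ℕ) : ℚ) - 1 + ((1+i : ℕ) : ℚ)) / ((1+i : ℕ) : ℚ)
          * (((m+2) - 2).choose ((1+i) - 1) : ℚ) * (-1) ^ ((1+i) - 1) * 2 ^ ((m+2) - (1+i))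
        = 2 * ((-1:ℚ)^i * 2^(m-i) * (m.choose i))
          + (-2) * ((-1:ℚ)^(i+1) * 2^(m-i) * ((m+1).choose (i+1))) := by
    intro i hi
    rw [Finset.mem_range] at hi
    have him : i ≤ m := by omega
    have e1 : (m+2) - 2 = m := by omega
    have e2 : (1+i) - 1 = i := by omega
    have e3 : (m+2) - (1+i) = (m-i) + 1 := by omega
    rw [e1, e2, e3]
    have hc : ((m:ℚ)+1) * (m.choose i) = (((m+1).choose (i+1)) : ℚ) * ((i:ℚ)+1) := by
      exact_mod_cast congrArg (Nat.cast : ℕ → ℚ) (Nat.add_one_mul_choose_eq m i)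
    have hne : ((1+i : ℕ) : ℚ) ≠ 0 := by positivity
    rw [div_mul_eq_mul_div, div_mul_eq_mul_div, div_mul_eq_mul_div, div_eq_iff hne]
    push_cast
    linear_combination (2 * (-1:ℚ)^i * 2^(m-i)) * hc
  rw [Finset.sum_congr rfl key, Finset.sum_add_distrib, ← Finset.mul_sum, ← Finset.mul_sum,
    hS1, hT]
  ring
end

section
/- Let n ≥ 2 and let z be the word of length n defined by z_{2k-1} = k and z_{2k} = n+1−k (that is, z = 1 n 2 (n−1) 3 (n−2) ⋯). Then z is a flattened permutation, occ(z) ≥ occ(w) for every flattened permutation w of length n, and occ(z) = n(n−2)/4 if n is even and occ(z) = (n−1)²/4 if n is odd. -/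
open Finset Polynomial

/-- The word `z = 1 n 2 (n−1) 3 (n−2) ⋯` of length `n`
(`z_{2k-1} = k`, `z_{2k} = n+1−k`, 1-based). -/
def zigzag (n : ℕ) : List ℕ :=
  (List.range n).map (fun p => if p % 2 = 0 then p / 2 + 1 else n - p / 2)


section Aux

variable {n : ℕ} (π : Equiv.Perm (Fin n))

lemma perm_periodic (m : Fin n) : Function.IsPeriodicPt π (orderOf π) m := by
  unfold Function.IsPeriodicPt Function.IsFixedPt
  rw [Equiv.Perm.iterate_eq_pow, pow_orderOf_eq_one]; rfl

lemma permMinPeriod_pos (m : Fin n) : 0 < Function.minimalPeriod π m :=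
  (perm_periodic π m).minimalPeriod_pos (orderOf_pos π)

lemma cycleList_nodup (m : Fin n) : (cycleList π m).Nodup := by
  apply List.Nodup.map_on ?_ List.nodup_range
  intro x hx y hy hxy
  simp only [List.mem_range] at hx hy
  refine Function.iterate_injOn_Iio_minimalPeriod hx hy ?_
  simpa [Equiv.Perm.iterate_eq_pow] using hxy

lemma permMinPeriod_le (m : Fin n) : Function.minimalPeriod π m ≤ n := by
  have h := (cycleList_nodup π m).length_le_card
  simpa [cycleList] using h

lemma perm_pow_mod (m : Fin n) (k : ℕ) :
    (π ^ (k % Function.minimalPeriod π m)) m = (π ^ k) m := by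
  have := Function.iterate_mod_minimalPeriod_eq (f := ⇑π) (x := m) (n := k)
  rw [← Equiv.Perm.iterate_eq_pow, ← Equiv.Perm.iterate_eq_pow]
  exact this

lemma min_all {m : Fin n} (hm : ∀ k < n, m ≤ (π ^ k) m) (k : ℕ) : m ≤ (π ^ k) m := by
  rw [← perm_pow_mod]
  exact hm _ (lt_of_lt_of_le (Nat.mod_lt _ (permMinPeriod_pos π m)) (permMinPeriod_le π m))

lemma flatten_nodup : (((cycleMins π).map (cycleList π)).flatten).Nodup := by
  rw [List.nodup_flatten]
  constructor
  · intro l hl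
    obtain ⟨m, _, rfl⟩ := List.mem_map.mp hl
    exact cycleList_nodup π m
  · rw [List.pairwise_map]
    have hnd : (cycleMins π).Pairwise (· ≠ ·) := (Finset.sort_nodup _ _)
    refine List.Pairwise.imp_of_mem ?_ hnd
    intro m m' hm hm' hne
    have hmin : ∀ k < n, m ≤ (π ^ k) m := by
      have := (Finset.mem_sort (α := Fin n) (· ≤ ·)).mp hm
      simpa using (Finset.mem_filter.mp this).2
    have hmin' : ∀ k < n, m' ≤ (π ^ k) m' := by
      have := (Finset.mem_sort (α := Fin n) (· ≤ ·)).mp hm'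
      simpa using (Finset.mem_filter.mp this).2
    intro x hx hx'
    simp only [cycleList, List.mem_map, List.mem_range] at hx hx'
    obtain ⟨k, hk, rfl⟩ := hx
    obtain ⟨l, hl, hlx⟩ := hx'
    have h1 : π.SameCycle m ((π ^ k) m) := ⟨(k : ℤ), by simp [zpow_natCast]⟩
    have h2 : π.SameCycle m' ((π ^ k) m) := ⟨(l : ℤ), by simp [zpow_natCast, hlx]⟩
    have hsc : π.SameCycle m m' := h1.trans h2.symm
    obtain ⟨i, _, hi⟩ := hsc.exists_pow_eq'
    obtain ⟨j, _, hj⟩ := hsc.symm.exists_pow_eq'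
    exact hne (le_antisymm (hi ▸ min_all π hmin i) (hj ▸ min_all π hmin' j))

lemma flattenPerm_eq :
    flattenPerm π = ((cycleMins π).map (cycleList π)).flatten.map (fun m => m.val + 1) := by
  unfold flattenPerm
  simp only [List.bind_eq_flatMap]
  simp only [show (fun (a : Fin n) => (pure (a : ℕ) : List ℕ)) = pure ∘ Fin.val from rfl,
    List.flatMap_pure_eq_map, List.map_map]
  rfl

lemma flattenPerm_length_le : (flattenPerm π).length ≤ n := by
  have h := (flatten_nodup π).length_le_card
  rw [Fintype.card_fin] at h
  rw [flattenPerm_eq, List.length_map]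
  exact h

lemma revPerm_pow_apply (k : ℕ) (m : Fin n) :
    ((Fin.revPerm : Equiv.Perm (Fin n)) ^ k) m = if k % 2 = 0 then m else m.rev := by
  induction k with
  | zero => simp
  | succ k ih =>
    rw [pow_succ', Equiv.Perm.mul_apply, ih]
    by_cases hk : k % 2 = 0
    · rw [if_pos hk, if_neg (by omega)]
      rfl
    · rw [if_neg hk, if_pos (by omega)]
      show (m.rev).rev = m
      exact Fin.rev_rev m

lemma minPeriod_revPerm (m : Fin n) :
    Function.minimalPeriod (Fin.revPerm : Equiv.Perm (Fin n)) m
      = if m.rev = m then 1 else 2 := by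
  have hper : Function.IsPeriodicPt (Fin.revPerm : Equiv.Perm (Fin n)) 2 m := by
    show (Fin.revPerm : Equiv.Perm (Fin n))^[2] m = m
    simp [Fin.rev_rev]
  split
  · next h =>
    exact Function.minimalPeriod_eq_one_iff_isFixedPt.mpr h
  · next h =>
    have h2 := hper.minimalPeriod_le (by norm_num)
    have h0 := hper.minimalPeriod_pos (by norm_num)
    have h1 : Function.minimalPeriod (Fin.revPerm : Equiv.Perm (Fin n)) m ≠ 1 := by
      intro hc
      exact h (Function.minimalPeriod_eq_one_iff_isFixedPt.mp hc)
    omega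

lemma cycleList_revPerm (m : Fin n) :
    cycleList Fin.revPerm m = if m.rev = m then [m] else [m, m.rev] := by
  unfold cycleList
  rw [minPeriod_revPerm]
  split
  · rw [show List.range 1 = [0] from rfl]
    simp
  · rw [show List.range 2 = [0, 1] from rfl]
    simp [revPerm_pow_apply]

lemma cycleMins_revPerm_map_val (hn : 2 ≤ n) :
    (cycleMins (Fin.revPerm : Equiv.Perm (Fin n))).map Fin.val = List.range ((n+1)/2) := by
  have hmem : ∀ m : Fin n, (∀ k < n, m ≤ ((Fin.revPerm : Equiv.Perm (Fin n)) ^ k) m)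
      ↔ 2 * m.val < n := by
    intro m
    constructor
    · intro h
      have := h 1 (by omega)
      rw [pow_one] at this
      have := (Fin.le_def).mp this
      simp only [Fin.revPerm_apply, Fin.val_rev] at this
      omega
    · intro h k _
      rw [revPerm_pow_apply]
      split
      · exact le_refl m
      · rw [Fin.le_def]
        simp only [Fin.val_rev]
        omega
  unfold cycleMins
  refine (fun hp hs => List.Perm.eq_of_pairwise' hs List.pairwise_le_range hp) ?_ ?_
  · rw [List.perm_ext_iff_of_nodup ((Finset.sort_nodup _ _).map Fin.val_injective)
      List.nodup_range]
    intro a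
    simp only [List.mem_map, Finset.mem_sort, Finset.mem_filter, Finset.mem_univ, true_and,
      List.mem_range]
    constructor
    · rintro ⟨m, hm, rfl⟩
      have := (hmem m).mp hm
      omega
    · intro ha
      have han : a < n := by omega
      exact ⟨⟨a, han⟩, (hmem ⟨a, han⟩).mpr (by simpa using by omega), rfl⟩
  · have hs := Finset.pairwise_sort
      (Finset.univ.filter (fun m : Fin n => ∀ k < n, m ≤ ((Fin.revPerm : Equiv.Perm (Fin n)) ^ k) m)) (· ≤ ·)
    exact List.Pairwise.map Fin.val (fun {a b} h => Fin.le_def.mp h) hs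

lemma mem_cycleMins_rev (hn : 2 ≤ n) {m : Fin n}
    (hm : m ∈ cycleMins (Fin.revPerm : Equiv.Perm (Fin n))) : 2 * m.val < n := by
  have h1 := (Finset.mem_sort (α := Fin n) (· ≤ ·)).mp hm
  have hmin := (Finset.mem_filter.mp h1).2
  have h2 := hmin 1 (by omega)
  rw [pow_one] at h2
  have h3 := Fin.le_def.mp h2
  simp only [Fin.revPerm_apply, Fin.val_rev] at h3
  omega

lemma pairs_flatten {α : Type*} (g : ℕ → α) :
    ∀ m, ((List.range m).map (fun k => [g (2*k), g (2*k+1)])).flatten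
      = (List.range (2*m)).map g := by
  intro m
  induction m with
  | zero => simp
  | succ m ih =>
    rw [List.range_succ, show 2*(m+1) = (2*m+1)+1 by ring, List.range_succ,
      List.range_succ]
    simp [ih]

lemma zig_blocks (hn : 2 ≤ n) :
    ((List.range ((n+1)/2)).map
      (fun k => if 2*k+1 = n then [k+1] else [k+1, n-k])).flatten = zigzag n := by
  set g : ℕ → ℕ := fun p => if p % 2 = 0 then p/2+1 else n - p/2 with hg
  have hblock : ∀ k, 2*k+1 < n →
      (if 2*k+1 = n then [k+1] else [k+1, n-k]) = [g (2*k), g (2*k+1)] := by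
    intro k hk
    rw [if_neg (by omega)]
    have h1 : (2*k) % 2 = 0 := by omega
    have h2 : (2*k)/2 = k := by omega
    have h3 : (2*k+1) % 2 = 1 := by omega
    have h4 : (2*k+1)/2 = k := by omega
    simp [hg, h1, h2, h3, h4]
  rcases Nat.even_or_odd n with ⟨h, rfl⟩ | ⟨h, rfl⟩
  · have hh : (h + h + 1)/2 = h := by omega
    rw [hh]
    rw [List.map_congr_left (fun k hk => hblock k (by
      simp only [List.mem_range] at hk; omega))]
    rw [pairs_flatten g h, show 2*h = h+h by ring, zigzag, ← hg]
  · have hh : (2*h+1+1)/2 = h + 1 := by omega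
    rw [hh, List.range_succ, List.map_append, List.flatten_append]
    rw [List.map_congr_left (fun k hk => hblock k (by
      simp only [List.mem_range] at hk; omega))]
    rw [pairs_flatten g h]
    have hg2 : g (2*h) = h + 1 := by
      have h1 : (2*h) % 2 = 0 := by omega
      have h2 : (2*h)/2 = h := by omega
      simp [hg, h1, h2]
    simp only [List.map_cons, List.map_nil, List.flatten_cons, List.flatten_nil,
      List.append_nil]
    rw [if_pos trivial, ← hg2, zigzag, ← hg, show 2*h+1 = (2*h)+1 from rfl, List.range_succ]
    simp

lemma flattenPerm_revPerm (hn : 2 ≤ n) :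
    flattenPerm (Fin.revPerm : Equiv.Perm (Fin n)) = zigzag n := by
  rw [flattenPerm_eq, List.map_flatten, List.map_map]
  have hcongr : (cycleMins (Fin.revPerm : Equiv.Perm (Fin n))).map
      ((List.map fun m => m.val + 1) ∘ cycleList Fin.revPerm)
      = (cycleMins (Fin.revPerm : Equiv.Perm (Fin n))).map
        ((fun k => if 2*k+1 = n then [k+1] else [k+1, n-k]) ∘ Fin.val) := by
    apply List.map_congr_left
    intro m hm
    have hm2 : 2 * m.val < n := mem_cycleMins_rev hn hm
    simp only [Function.comp_apply]
    rw [cycleList_revPerm]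
    by_cases hr : m.rev = m
    · have hv := congrArg Fin.val hr
      simp only [Fin.val_rev] at hv
      rw [if_pos hr, if_pos (by omega)]
      simp
    · have hne : ¬ (2*m.val+1 = n) := by
        intro hc
        apply hr
        apply Fin.ext
        simp only [Fin.val_rev]
        omega
      rw [if_neg hr, if_neg hne]
      simp only [List.map_cons, List.map_nil, Fin.val_rev]
      have : n - (m.val + 1) + 1 = n - m.val := by omega
      rw [this]
  rw [hcongr, ← List.map_map, cycleMins_revPerm_map_val hn, zig_blocks hn]

lemma occ_le (w : List ℕ) : occ w ≤ ∑ j ∈ Finset.range w.length, j / 2 := by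
  unfold occ
  rw [Finset.card_eq_sum_card_fiberwise (f := Prod.snd) (t := Finset.range w.length)
    (fun p hp => by simp only [Finset.mem_coe, Finset.mem_filter, Finset.mem_product, Finset.mem_range] at hp ⊢
                    exact hp.1.2)]
  apply Finset.sum_le_sum
  intro j hj
  have hc : j / 2 = (Finset.range (j/2)).card := (Finset.card_range _).symm
  rw [hc]
  apply Finset.card_le_card_of_injOn (fun p => (p.1 - 1) / 2)
  · intro p hp
    simp only [Finset.mem_coe, Finset.mem_filter, Finset.mem_product, Finset.mem_range] at hp ⊢
    obtain ⟨⟨_, h1, hlt, _, _⟩, h2⟩ := hp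
    omega
  · intro p hp q hq h
    simp only [Finset.coe_filter, Set.mem_setOf_eq, Finset.mem_filter,
      Finset.mem_product, Finset.mem_range] at hp hq
    obtain ⟨⟨⟨_, _⟩, hp1, hplt, hpa, hpb⟩, hpj⟩ := hp
    obtain ⟨⟨⟨_, _⟩, hq1, hqlt, hqa, hqb⟩, hqj⟩ := hq
    simp only at h
    have hcase : p.1 = q.1 ∨ p.1 = q.1 + 1 ∨ q.1 = p.1 + 1 := by omega
    rcases hcase with h' | h' | h'
    · exact Prod.ext h' (hpj.trans hqj.symm)
    · exfalso; rw [h', Nat.add_sub_cancel, hpj] at hpa; rw [hqj] at hqb; omega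
    · exfalso; rw [h', Nat.add_sub_cancel, hqj] at hqa; rw [hpj] at hpb; omega

lemma T_closed : ∀ n : ℕ, ∑ j ∈ Finset.range n, j / 2 = (n-1)^2/4 := by
  intro n
  induction n using Nat.twoStepInduction with
  | zero => simp
  | one => simp
  | more n ih _ =>
    rw [show n+2 = (n+1)+1 from rfl, Finset.sum_range_succ, Finset.sum_range_succ, ih]
    rcases n with _ | k
    · simp
    · have h : (k+1+2-1)^2 = (k+1-1)^2 + 4*(k+1) := by
        rw [show k+1+2-1 = k+2 by omega, show k+1-1 = k by omega]; ring
      rw [h]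
      generalize (k+1-1)^2 = a
      omega

lemma final_arith (n : ℕ) (hn : 2 ≤ n) :
    (if n % 2 = 0 then n * (n - 2) / 4 else (n - 1) ^ 2 / 4) = (n-1)^2/4 := by
  split
  · next h =>
    obtain ⟨k, rfl⟩ : ∃ k, n = 2*k+2 := ⟨(n-2)/2, by omega⟩
    have e1 : (2*k+2) * (2*k+2-2) = 4*(k*k+k) := by
      rw [show 2*k+2-2 = 2*k by omega]; ring
    have e2 : (2*k+2-1)^2 = 4*(k*k+k)+1 := by
      rw [show 2*k+2-1 = 2*k+1 by omega]; ring
    rw [e1, e2]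
    omega
  · rfl

lemma zigzag_length (n : ℕ) : (zigzag n).length = n := by simp [zigzag]

lemma zigzag_getD (n p : ℕ) (hp : p < n) :
    (zigzag n).getD p 0 = if p % 2 = 0 then p / 2 + 1 else n - p / 2 := by
  rw [List.getD_eq_getElem _ _ (by simpa [zigzag] using hp)]
  simp [zigzag]

lemma occ_zigzag_ge (n : ℕ) : ∑ j ∈ Finset.range n, j / 2 ≤ occ (zigzag n) := by
  classical
  have hcard : ∑ j ∈ Finset.range n, j / 2
      = ((Finset.range n).sigma (fun j => Finset.range (j/2))).card := by
    rw [Finset.card_sigma]; simp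
  rw [hcard]
  unfold occ
  apply Finset.card_le_card_of_injOn (fun q => (2*q.2+1, q.1))
  · intro q hq
    simp only [Finset.mem_coe, Finset.mem_sigma, Finset.mem_range] at hq
    obtain ⟨hj, ha⟩ := hq
    set j := q.1 with hjdef
    set a := q.2 with hadef
    have h2a : 2*a+1 < j := by omega
    simp only [Finset.mem_coe, Finset.mem_filter, Finset.mem_product, Finset.mem_range, zigzag_length]
    refine ⟨⟨by omega, hj⟩, by omega, h2a, ?_, ?_⟩
    · rw [show 2*a+1-1 = 2*a by omega, zigzag_getD n (2*a) (by omega),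
        zigzag_getD n j (by omega)]
      simp only [Nat.mul_mod_right, if_true]
      rw [show 2*a/2 = a by omega]
      split <;> omega
    · rw [zigzag_getD n (2*a+1) (by omega), zigzag_getD n j (by omega)]
      simp only [show (2*a+1) % 2 = 1 from by omega, show (2*a+1)/2 = a from by omega,
        Nat.one_ne_zero, if_false]
      split <;> omega
  · intro q hq r hr h
    simp only [Prod.mk.injEq] at h
    exact Sigma.ext h.2 (by simp; omega)

end Aux


/-- For `n ≥ 2`, the word `z = 1 n 2 (n−1) 3 (n−2) ⋯` is a flattened
permutation, it maximizes `occ` among flattened permutations of length `n`, and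
`occ(z) = n(n−2)/4` for even `n` and `(n−1)²/4` for odd `n`. -/


theorem zigzag_maximizes_occ (n : ℕ) (hn : 2 ≤ n) :
    (∃ π : Equiv.Perm (Fin n), flattenPerm π = zigzag n)
    ∧ (∀ π : Equiv.Perm (Fin n), occ (flattenPerm π) ≤ occ (zigzag n))
    ∧ occ (zigzag n) = (if n % 2 = 0 then n * (n - 2) / 4 else (n - 1) ^ 2 / 4) := by
  have hTz : occ (zigzag n) = ∑ j ∈ Finset.range n, j/2 := by
    apply le_antisymm
    · have h := occ_le (zigzag n)
      rwa [zigzag_length] at h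
    · exact occ_zigzag_ge n
  refine ⟨⟨Fin.revPerm, flattenPerm_revPerm hn⟩, ?_, ?_⟩
  · intro π
    calc occ (flattenPerm π) ≤ ∑ j ∈ Finset.range (flattenPerm π).length, j/2 := occ_le _
      _ ≤ ∑ j ∈ Finset.range n, j/2 := Finset.sum_le_sum_of_subset
          (Finset.range_subset_range.mpr (flattenPerm_length_le π))
      _ = occ (zigzag n) := hTz.symm
  · rw [hTz, T_closed]
    exact (final_arith n hn).symm
end

section
/- If w is a flattened permutation of length n whose second letter is i (i.e., w starts with 1, i), then occ(w) ≥ i − 2; consequently, for all r ≥ 0 and i ≥ r + 3, g_{n,r}(1i) = 0. -/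
open Finset Polynomial

lemma mem_periodic {n : ℕ} (π : Equiv.Perm (Fin n)) (x : Fin n) :
    x ∈ Function.periodicPts π := by
  refine ⟨orderOf π, orderOf_pos π, ?_⟩
  show π^[orderOf π] x = x
  rw [← Equiv.Perm.coe_pow, pow_orderOf_eq_one]; rfl

lemma exists_cycle_mem {n : ℕ} (π : Equiv.Perm (Fin n)) (m : Fin n) :
    ∃ c ∈ cycleMins π, m ∈ cycleList π c := by
  classical
  set S : Finset (Fin n) := Finset.univ.filter (fun x => π.SameCycle m x) with hS
  have hmS : m ∈ S := by simp [hS, Equiv.Perm.SameCycle.refl]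
  have hne : S.Nonempty := ⟨m, hmS⟩
  set c := S.min' hne with hc
  have hcS : c ∈ S := S.min'_mem hne
  have hsc : π.SameCycle m c := by simpa [hS] using hcS
  have hmin : ∀ x, π.SameCycle m x → c ≤ x := fun x hx =>
    S.min'_le x (by simp [hS, hx])
  refine ⟨c, ?_, ?_⟩
  · rw [cycleMins, Finset.mem_sort]
    simp only [Finset.mem_filter, Finset.mem_univ, true_and]
    intro k _
    exact hmin _ (hsc.trans ⟨(k : ℤ), by simp⟩)
  · have hcm : π.SameCycle c m := hsc.symm
    obtain ⟨i, hi, hpi⟩ := hcm.exists_pow_eq'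
    have hper : 0 < Function.minimalPeriod π c :=
      Function.minimalPeriod_pos_of_mem_periodicPts (mem_periodic π c)
    refine List.mem_map.mpr ⟨i % Function.minimalPeriod π c,
      List.mem_range.mpr (Nat.mod_lt _ hper), ?_⟩
    have h2 : (π ^ (i % Function.minimalPeriod (⇑π) c)) c = (π ^ i) c := by
      simp only [Equiv.Perm.coe_pow]
      exact Function.iterate_mod_minimalPeriod_eq
    rw [h2, hpi]

lemma mem_flattenPerm {n : ℕ} (π : Equiv.Perm (Fin n)) (v : ℕ) (h1 : 1 ≤ v) (h2 : v ≤ n) :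
    v ∈ flattenPerm π := by
  have hv : v - 1 < n := by omega
  obtain ⟨c, hc, hm⟩ := exists_cycle_mem π ⟨v - 1, hv⟩
  unfold flattenPerm
  simp only [List.mem_map, List.mem_flatten, bind_pure_comp, Function.comp]
  simp
  exact ⟨c, ⟨v - 1, hv⟩, ⟨hc, hm⟩, by show v - 1 + 1 = v; omega⟩

lemma flattenPerm_le {n : ℕ} (π : Equiv.Perm (Fin n)) (v : ℕ) (h : v ∈ flattenPerm π) :
    1 ≤ v ∧ v ≤ n := by
  unfold flattenPerm at h
  simp at h
  obtain ⟨a, ⟨m, _, _⟩, rfl⟩ := h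
  exact ⟨Nat.le_add_left _ _, a.isLt⟩

lemma getD_of_lt (w : List ℕ) (k : ℕ) (h : k < w.length) : w.getD k 0 = w[k] := by
  simp [List.getD_eq_getElem?_getD, List.getElem?_eq_getElem h]

lemma key_occ (i : ℕ) (t : List ℕ)
    (hall : ∀ v, 2 ≤ v → v < i → v ∈ (1 :: i :: t)) :
    i - 2 ≤ occ (1 :: i :: t) := by
  classical
  set w : List ℕ := 1 :: i :: t with hw
  have hlen : w.length = t.length + 2 := by simp [hw]
  have h0 : w.getD 0 0 = 1 := rfl
  have h1 : w.getD 1 0 = i := rfl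
  have hprop : ∀ v ∈ Finset.Icc 2 (i - 1),
      w.idxOf v < w.length ∧ w.getD (w.idxOf v) 0 = v ∧ 2 ≤ w.idxOf v := by
    intro v hv
    rw [Finset.mem_Icc] at hv
    have hvm : v ∈ w := hall v hv.1 (by omega)
    have hlt : w.idxOf v < w.length := List.idxOf_lt_length_iff.mpr hvm
    have hget : w.getD (w.idxOf v) 0 = v := by
      rw [getD_of_lt _ _ hlt]; exact List.getElem_idxOf hlt
    refine ⟨hlt, hget, ?_⟩
    by_contra hc
    interval_cases h : w.idxOf v
    · rw [h0] at hget; omega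
    · rw [h1] at hget; omega
  have hsub : (Finset.Icc 2 (i - 1)).image (fun v => ((1 : ℕ), w.idxOf v)) ⊆
      ((Finset.range w.length ×ˢ Finset.range w.length).filter
        (fun p : ℕ × ℕ => 1 ≤ p.1 ∧ p.1 < p.2 ∧
          w.getD (p.1 - 1) 0 < w.getD p.2 0 ∧ w.getD p.2 0 < w.getD p.1 0)) := by
    intro p hp
    rw [Finset.mem_image] at hp
    obtain ⟨v, hv, rfl⟩ := hp
    obtain ⟨hlt, hget, h2le⟩ := hprop v hv
    rw [Finset.mem_Icc] at hv
    rw [Finset.mem_filter, Finset.mem_product]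
    refine ⟨⟨Finset.mem_range.mpr (by omega), Finset.mem_range.mpr hlt⟩,
      le_refl 1, by omega, ?_, ?_⟩
    · have e : (1:ℕ) - 1 = 0 := rfl
      rw [e, h0, hget]; omega
    · rw [hget, h1]; omega
  have hinj : Set.InjOn (fun v => ((1 : ℕ), w.idxOf v)) (Finset.Icc 2 (i - 1)) := by
    intro a ha b hb hab
    have hga := (hprop a ha).2.1
    have hgb := (hprop b hb).2.1
    have : w.idxOf a = w.idxOf b := by
      simpa using congrArg Prod.snd hab
    rw [← hga, ← hgb, this]
  have hcard : ((Finset.Icc 2 (i - 1)).image (fun v => ((1 : ℕ), w.idxOf v))).card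
      = i - 2 := by
    rw [Finset.card_image_of_injOn hinj, Nat.card_Icc]; omega
  calc i - 2 = _ := hcard.symm
    _ ≤ _ := Finset.card_le_card hsub


/-- A flattened permutation starting with `1, i` has at least `i − 2`
occurrences of the pattern 13-2; consequently `g_{n,r}(1i) = 0` whenever `i ≥ r + 3`. -/
theorem occ_lower_bound_of_prefix :
    (∀ (n : ℕ) (π : Equiv.Perm (Fin n)) (i : ℕ), [1, i] <+: flattenPerm π →
      i - 2 ≤ occ (flattenPerm π))
    ∧ ∀ (n r i : ℕ), r + 3 ≤ i → gCount n r [1, i] = 0 := by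
  have h1 : ∀ (n : ℕ) (π : Equiv.Perm (Fin n)) (i : ℕ), [1, i] <+: flattenPerm π →
      i - 2 ≤ occ (flattenPerm π) := by
    intro n π i hpre
    obtain ⟨t, ht⟩ := hpre
    have hw : flattenPerm π = 1 :: i :: t := ht.symm
    rw [hw]
    apply key_occ
    intro v h2 hvi
    rw [← hw]
    have hi : i ∈ flattenPerm π := by rw [hw]; simp
    have hin := flattenPerm_le π i hi
    exact mem_flattenPerm π v (by omega) (by omega)
  refine ⟨h1, ?_⟩
  intro n r i hri
  rw [gCount, Finset.card_eq_zero, Finset.filter_eq_empty_iff]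
  intro π _
  rintro ⟨hpre, hocc⟩
  have := h1 n π i hpre
  omega
end
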